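/- Key a priori bound (Proposition 4): suppose β_n ≤ C_1 < 1 for all n ≥ N_1, and let u ∈ ℓ²(V,μ) satisfy Δ_θ²u + Wu ∈ ℓ²(V,μ) and Δ_θ²u + Wu = iλ u for some λ ∈ ℝ, where W(x) ≥ −q(r(x)) with q : [0,∞) → (0,∞) non-decreasing. Then there is a constant C independent of n such that for all n ≥ N_1, ‖Δ_θ(χ_n u)‖² ≤ C[β_n‖u‖² + ((q∘r)χ_n u, χ_n u)]. -/

import Mathlib

open scoped BigOperators

/-- The formal magnetic Laplacian on a weighted graph. -/
noncomputable def magLap {V : Type*} (μ : V → ℝ) (b : V → V → ℝ) (θ : V → V → ℝ)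
    (u : V → ℂ) (x : V) : ℂ :=
  (μ x : ℂ)⁻¹ * ∑' y, (b x y : ℂ) * (u x - Complex.exp (Complex.I * (θ x y : ℝ)) * u y)

/-- The term `P_ψ[u]`. -/
noncomputable def magP {V : Type*} (μ : V → ℝ) (b : V → V → ℝ) (θ : V → V → ℝ)
    (ψ u : V → ℂ) (x : V) : ℂ :=
  (μ x : ℂ)⁻¹ *
    ∑' y, (b x y : ℂ) * (ψ x - ψ y) * (u x - Complex.exp (Complex.I * (θ x y : ℝ)) * u y)

/-- The cut-off function `χ_n`. -/
noncomputable def cutoff {V : Type*} (dist : V → ℕ) (n : ℕ) (x : V) : ℝ :=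
  min (max ((2 * (n : ℝ) - (dist x : ℝ)) / (n : ℝ)) 0) 1

/-- Squared norm in `ℓ²(V, μ)`. -/
noncomputable def wnormSq {V : Type*} (μ : V → ℝ) (f : V → ℂ) : ℝ :=
  ∑' x, μ x * ‖f x‖ ^ 2

/-- Inner product in `ℓ²(V, μ)`. -/
noncomputable def wInner {V : Type*} (μ : V → ℝ) (f g : V → ℂ) : ℂ :=
  ∑' x, (μ x : ℂ) * f x * (starRingEnd ℂ) (g x)

namespace KeyAux

noncomputable section

variable {V : Type*}




/-- The edge phase. -/
def eθ (θ : V → V → ℝ) (x y : V) : ℂ := Complex.exp (Complex.I * (θ x y : ℝ))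

lemma eθ_norm (θ : V → V → ℝ) (x y : V) : ‖eθ θ x y‖ = 1 := by
  rw [eθ, mul_comm, Complex.norm_exp_ofReal_mul_I]

lemma eθ_conj (θ : V → V → ℝ) (hθ : ∀ x y, θ x y = -θ y x) (x y : V) :
    (starRingEnd ℂ) (eθ θ x y) = eθ θ y x := by
  rw [eθ, eθ, ← Complex.exp_conj]
  congr 1
  simp only [map_mul, Complex.conj_I, Complex.conj_ofReal]
  rw [hθ x y]
  push_cast
  ring

/-- Finite-sum magnetic Laplacian. -/
def lapS (μ : V → ℝ) (b θ : V → V → ℝ) (N : V → Finset V) (f : V → ℂ) (x : V) : ℂ :=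
  (μ x : ℂ)⁻¹ * ∑ y ∈ N x, (b x y : ℂ) * (f x - eθ θ x y * f y)

/-- Weighted commutator-type operator with coefficient `c`. -/
def pcS (μ : V → ℝ) (b θ : V → V → ℝ) (N : V → Finset V) (c : V → V → ℝ)
    (f : V → ℂ) (x : V) : ℂ :=
  (μ x : ℂ)⁻¹ * ∑ y ∈ N x, ((b x y * c x y : ℝ) : ℂ) * (f x - eθ θ x y * f y)

/-- Weighted "divergence" of a coefficient. -/
def dcS (μ : V → ℝ) (b : V → V → ℝ) (N : V → Finset V) (c : V → V → ℝ) (x : V) : ℂ :=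
  (μ x : ℂ)⁻¹ * ∑ y ∈ N x, ((b x y * c x y : ℝ) : ℂ)

/-- Finite-sum inner product. -/
def ipS (μ : V → ℝ) (F : Finset V) (f g : V → ℂ) : ℂ :=
  ∑ x ∈ F, (μ x : ℂ) * f x * (starRingEnd ℂ) (g x)

/-- Finite-sum squared norm. -/
def nsS (μ : V → ℝ) (F : Finset V) (f : V → ℂ) : ℝ :=
  ∑ x ∈ F, μ x * ‖f x‖ ^ 2

lemma nsS_nonneg (μ : V → ℝ) (hμ : ∀ x, 0 ≤ μ x) (F : Finset V) (f : V → ℂ) :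
    0 ≤ nsS μ F f :=
  Finset.sum_nonneg fun x _ => mul_nonneg (hμ x) (by positivity)

lemma ipS_self_re (μ : V → ℝ) (F : Finset V) (f : V → ℂ) :
    (ipS μ F f f).re = nsS μ F f := by
  rw [ipS, nsS, Complex.re_sum]
  refine Finset.sum_congr rfl fun x _ => ?_
  rw [mul_assoc, Complex.mul_conj]
  rw [← Complex.ofReal_mul]
  rw [Complex.ofReal_re]
  rw [Complex.normSq_eq_norm_sq]

/-- Cauchy-Schwarz for the finite weighted inner product. -/
lemma ipS_abs_le (μ : V → ℝ) (hμ : ∀ x, 0 ≤ μ x) (F : Finset V) (f g : V → ℂ) :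
    ‖ipS μ F f g‖ ≤ Real.sqrt (nsS μ F f) * Real.sqrt (nsS μ F g) := by
  have h1 : ‖ipS μ F f g‖ ≤ ∑ x ∈ F, (Real.sqrt (μ x) * ‖f x‖) * (Real.sqrt (μ x) * ‖g x‖) := by
    refine (norm_sum_le _ _).trans (Finset.sum_le_sum fun x _ => ?_)
    rw [norm_mul, norm_mul, RCLike.norm_conj]
    rw [Complex.norm_real, Real.norm_eq_abs, abs_of_nonneg (hμ x)]
    nth_rewrite 1 [← Real.mul_self_sqrt (hμ x)]
    ring_nf
    exact le_refl _
  refine h1.trans ?_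
  have h2 := Finset.sum_mul_sq_le_sq_mul_sq F (fun x => Real.sqrt (μ x) * ‖f x‖)
      (fun x => Real.sqrt (μ x) * ‖g x‖)
  have h3 : ∀ x, (Real.sqrt (μ x) * ‖f x‖) ^ 2 = μ x * ‖f x‖ ^ 2 := fun x => by
    rw [mul_pow, Real.sq_sqrt (hμ x)]
  have h4 : ∀ x, (Real.sqrt (μ x) * ‖g x‖) ^ 2 = μ x * ‖g x‖ ^ 2 := fun x => by
    rw [mul_pow, Real.sq_sqrt (hμ x)]
  simp only [h3, h4] at h2
  have h5 : (0:ℝ) ≤ ∑ x ∈ F, (Real.sqrt (μ x) * ‖f x‖) * (Real.sqrt (μ x) * ‖g x‖) :=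
    Finset.sum_nonneg fun x _ => by positivity
  calc ∑ x ∈ F, (Real.sqrt (μ x) * ‖f x‖) * (Real.sqrt (μ x) * ‖g x‖)
      = Real.sqrt ((∑ x ∈ F, (Real.sqrt (μ x) * ‖f x‖) * (Real.sqrt (μ x) * ‖g x‖))^2) :=
        (Real.sqrt_sq h5).symm
    _ ≤ Real.sqrt ((nsS μ F f) * (nsS μ F g)) := Real.sqrt_le_sqrt h2
    _ = Real.sqrt (nsS μ F f) * Real.sqrt (nsS μ F g) := Real.sqrt_mul
        (nsS_nonneg μ hμ F f) _

lemma clamp_abs_sub (s t : ℝ) : |min (max s 0) 1 - min (max t 0) 1| ≤ |s - t| := by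
  calc |min (max s 0) 1 - min (max t 0) 1|
      ≤ max |max s 0 - max t 0| |1 - 1| := abs_min_sub_min_le_max _ _ _ _
    _ ≤ |s - t| := by
        rw [sub_self, abs_zero]
        refine max_le ?_ (abs_nonneg _)
        exact abs_max_sub_max_le_abs s t 0

lemma le_sq_of_le_mul_sqrt {S c : ℝ} (hS : 0 ≤ S) (hc : 0 ≤ c)
    (h : S ≤ c * Real.sqrt S) : S ≤ c ^ 2 := by
  rcases eq_or_lt_of_le hS with h0 | h0
  · nlinarith
  · have hs := Real.sqrt_pos.mpr h0
    have : S = Real.sqrt S * Real.sqrt S := (Real.mul_self_sqrt hS).symm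
    nlinarith [Real.sq_sqrt hS, Real.sqrt_nonneg S]




lemma ball_finite {V : Type*} (G : SimpleGraph V) (hconn : G.Connected)
    (hnb : ∀ x : V, {y | G.Adj x y}.Finite) (x₀ : V) :
    ∀ m : ℕ, {x | G.dist x₀ x ≤ m}.Finite := by
  intro m
  induction m with
  | zero =>
    refine Set.Finite.subset (Set.finite_singleton x₀) fun x hx => ?_
    simp only [Set.mem_setOf_eq, Nat.le_zero] at hx
    have := (hconn.dist_eq_zero_iff (u := x₀) (v := x)).mp hx
    simp [this.symm]
  | succ m ih =>
    have hsub : {x | G.dist x₀ x ≤ m + 1} ⊆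
        {x | G.dist x₀ x ≤ m} ∪ ⋃ y ∈ {x | G.dist x₀ x ≤ m}, {z | G.Adj y z} := by
      intro x hx
      simp only [Set.mem_setOf_eq] at hx
      by_cases hxm : G.dist x₀ x ≤ m
      · exact Or.inl hxm
      · right
        obtain ⟨w, hw⟩ := (hconn x₀ x).exists_walk_length_eq_dist
        have hlen : w.reverse.length = m + 1 := by
          rw [SimpleGraph.Walk.length_reverse, hw]
          omega
        cases hrev : w.reverse with
        | nil => rw [hrev] at hlen; simp at hlen
        | cons h p =>
          rename_i y
          rw [hrev] at hlen
          simp only [SimpleGraph.Walk.length_cons] at hlen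
          have hyd : G.dist x₀ y ≤ m := by
            have := SimpleGraph.dist_le p.reverse
            rw [SimpleGraph.Walk.length_reverse] at this
            omega
          refine Set.mem_biUnion hyd ?_
          exact h.symm
    exact Set.Finite.subset (ih.union (Set.Finite.biUnion ih fun y _ => hnb y)) hsub


lemma green (μ : V → ℝ) (μ₀ : ℝ) (b θ : V → V → ℝ) (N : V → Finset V)
    (hμ0 : 0 < μ₀) (hμ : ∀ x, μ₀ ≤ μ x)
    (hbsymm : ∀ x y, b x y = b y x) (hbnn : ∀ x y, 0 ≤ b x y)
    (hθa : ∀ x y, θ x y = -θ y x)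
    (hN : ∀ x y, y ∈ N x ↔ 0 < b x y)
    (T F1 F2 : Finset V) (hT1 : T ⊆ F1) (h12 : F1 ⊆ F2)
    (hNT : ∀ x ∈ T, N x ⊆ F1) (hN1 : ∀ x ∈ F1, N x ⊆ F2)
    (f g : V → ℂ) (hg : ∀ x, g x ≠ 0 → x ∈ T) :
    ipS μ F2 (lapS μ b θ N f) g = ipS μ F2 f (lapS μ b θ N g) := by
  have hbz : ∀ x y, y ∉ N x → b x y = 0 := fun x y hy =>
    le_antisymm (not_lt.mp fun h => hy ((hN x y).mpr h)) (hbnn x y)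
  have hμc : ∀ x, (μ x : ℂ) ≠ 0 := fun x => by
    have : (0:ℝ) < μ x := lt_of_lt_of_le hμ0 (hμ x)
    exact_mod_cast ne_of_gt this
  have hgz : ∀ x, x ∉ T → g x = 0 := fun x hx => by
    by_contra h; exact hx (hg x h)
  -- LHS as double sum
  have L1 : ipS μ F2 (lapS μ b θ N f) g =
      ∑ x ∈ T, ∑ y ∈ F2, ((b x y : ℂ) * f x * (starRingEnd ℂ) (g x)
        - (b x y : ℂ) * eθ θ x y * f y * (starRingEnd ℂ) (g x)) := by
    rw [ipS, ← Finset.sum_subset (hT1.trans h12)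
      (fun x _ hx => by rw [hgz x hx]; simp)]
    refine Finset.sum_congr rfl fun x hx => ?_
    rw [lapS]
    rw [show (μ x : ℂ) * ((μ x : ℂ)⁻¹ * ∑ y ∈ N x, (b x y : ℂ) * (f x - eθ θ x y * f y))
        * (starRingEnd ℂ) (g x)
        = (∑ y ∈ N x, (b x y : ℂ) * (f x - eθ θ x y * f y)) * (starRingEnd ℂ) (g x) by
      rw [← mul_assoc, mul_inv_cancel₀ (hμc x), one_mul]]
    rw [Finset.sum_subset ((hNT x hx).trans h12)
      (fun y _ hy => by rw [hbz x y hy]; simp)]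
    rw [Finset.sum_mul]
    exact Finset.sum_congr rfl fun y _ => by ring
  -- RHS as double sum
  have R0 : ∀ x, x ∉ F1 → lapS μ b θ N g x = 0 := by
    intro x hx
    have hgx : g x = 0 := hgz x fun hxT => hx (hT1 hxT)
    have hgy : ∀ y ∈ N x, g y = 0 := by
      intro y hy
      by_contra h
      have hyT := hg y h
      have : x ∈ N y := (hN y x).mpr (by rw [← hbsymm x y]; exact (hN x y).mp hy)
      exact hx (hNT y hyT this)
    rw [lapS]
    rw [Finset.sum_eq_zero fun y hy => by rw [hgx, hgy y hy]; ring]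
    simp
  have R1 : ipS μ F2 f (lapS μ b θ N g) =
      ∑ x ∈ F1, ∑ y ∈ F2, ((b x y : ℂ) * f x * (starRingEnd ℂ) (g x)
        - (b x y : ℂ) * (starRingEnd ℂ) (eθ θ x y) * f x * (starRingEnd ℂ) (g y)) := by
    rw [ipS, ← Finset.sum_subset h12 (fun x _ hx => by rw [R0 x hx]; simp)]
    refine Finset.sum_congr rfl fun x hx => ?_
    rw [lapS]
    rw [show (μ x : ℂ) * f x * (starRingEnd ℂ)
        ((μ x : ℂ)⁻¹ * ∑ y ∈ N x, (b x y : ℂ) * (g x - eθ θ x y * g y))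
        = f x * (starRingEnd ℂ) (∑ y ∈ N x, (b x y : ℂ) * (g x - eθ θ x y * g y)) by
      rw [map_mul, map_inv₀, Complex.conj_ofReal,
        show ∀ a c : ℂ, (μ x : ℂ) * a * ((μ x : ℂ)⁻¹ * c) = a * c * ((μ x : ℂ) * (μ x : ℂ)⁻¹)
          from fun a c => by ring,
        mul_inv_cancel₀ (hμc x), mul_one]]
    rw [map_sum]
    rw [Finset.sum_subset (hN1 x hx) (fun y _ hy => by
      rw [show ((b x y : ℂ) * (g x - eθ θ x y * g y)) = 0 by rw [hbz x y hy]; simp]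
      simp)]
    rw [Finset.mul_sum]
    refine Finset.sum_congr rfl fun y _ => ?_
    rw [map_mul, map_sub, map_mul, Complex.conj_ofReal]
    ring
  rw [L1, R1]
  simp only [Finset.sum_sub_distrib]
  have hA : ∑ x ∈ T, ∑ y ∈ F2, (b x y : ℂ) * f x * (starRingEnd ℂ) (g x)
      = ∑ x ∈ F1, ∑ y ∈ F2, (b x y : ℂ) * f x * (starRingEnd ℂ) (g x) :=
    Finset.sum_subset hT1 (fun x _ hx => by rw [hgz x hx]; simp)
  have hB : ∑ x ∈ F1, ∑ y ∈ F2, (b x y : ℂ) * (starRingEnd ℂ) (eθ θ x y) * f x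
        * (starRingEnd ℂ) (g y)
      = ∑ x ∈ T, ∑ y ∈ F2, (b x y : ℂ) * eθ θ x y * f y * (starRingEnd ℂ) (g x) := by
    calc ∑ x ∈ F1, ∑ y ∈ F2, (b x y : ℂ) * (starRingEnd ℂ) (eθ θ x y) * f x
          * (starRingEnd ℂ) (g y)
        = ∑ x ∈ F1, ∑ y ∈ T, (b x y : ℂ) * (starRingEnd ℂ) (eθ θ x y) * f x
          * (starRingEnd ℂ) (g y) := by
          refine Finset.sum_congr rfl fun x _ => ?_
          exact (Finset.sum_subset (hT1.trans h12) (fun y _ hy => by rw [hgz y hy]; simp)).symm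
      _ = ∑ y ∈ T, ∑ x ∈ F1, (b x y : ℂ) * (starRingEnd ℂ) (eθ θ x y) * f x
          * (starRingEnd ℂ) (g y) := Finset.sum_comm
      _ = ∑ y ∈ T, ∑ x ∈ F2, (b x y : ℂ) * (starRingEnd ℂ) (eθ θ x y) * f x
          * (starRingEnd ℂ) (g y) := by
          refine Finset.sum_congr rfl fun y hy => Finset.sum_subset h12 fun x _ hx => ?_
          have hb0 : b x y = 0 := by
            rw [hbsymm]
            exact hbz y x fun hmem => hx (hNT y hy hmem)
          rw [hb0]; simp
      _ = ∑ x ∈ T, ∑ y ∈ F2, (b x y : ℂ) * eθ θ x y * f y * (starRingEnd ℂ) (g x) := by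
          refine Finset.sum_congr rfl fun y hy => Finset.sum_congr rfl fun x hx => ?_
          rw [eθ_conj θ hθa x y, hbsymm x y]
  rw [hA, hB]




section Master

variable (μ : V → ℝ) (μ₀ : ℝ) (b θ : V → V → ℝ) (N : V → Finset V)
  (dd : V → ℕ) (n2 : ℕ) (Dn Pn : ℝ) (F2 : Finset V)
  (c : V → V → ℝ) (α : ℝ)

variable (hμ0 : 0 < μ₀) (hμ : ∀ x, μ₀ ≤ μ x)
  (hbsymm : ∀ x y, b x y = b y x) (hbnn : ∀ x y, 0 ≤ b x y)
  (hN : ∀ x y, y ∈ N x ↔ 0 < b x y)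
  (hDn : ∀ x, dd x ≤ n2 → ((N x).card : ℝ) ≤ Dn)
  (hPn : ∀ x y, dd x ≤ n2 → b x y ≤ Pn)
  (hDn0 : 0 ≤ Dn) (hPn0 : 0 ≤ Pn)
  (hF : ∀ x, dd x ≤ n2 → x ∈ F2)
  (hα : 0 ≤ α)
  (hc1 : ∀ x y, 0 < b x y → |c x y| ≤ α)
  (hc2 : ∀ x y, 0 < b x y → c x y ≠ 0 → dd x ≤ n2 ∧ dd y ≤ n2)

include hbnn hN hDn hPn hDn0 hPn0 hα hc1 hc2 in
/-- row sums of the weight are bounded by `α·Dn·Pn`. -/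
lemma row_bound : ∀ x, ∑ y ∈ N x, b x y * |c x y| ≤ α * Dn * Pn := by
  intro x
  by_cases hex : ∃ y ∈ N x, c x y ≠ 0
  · obtain ⟨y0, hy0, hc0⟩ := hex
    have hdd : dd x ≤ n2 := (hc2 x y0 ((hN x y0).mp hy0) hc0).1
    calc ∑ y ∈ N x, b x y * |c x y| ≤ ∑ _y ∈ N x, Pn * α := by
          refine Finset.sum_le_sum fun y hy => ?_
          by_cases hb : 0 < b x y
          · exact mul_le_mul (hPn x y hdd) (hc1 x y hb) (abs_nonneg _) hPn0
          · have : b x y = 0 := le_antisymm (not_lt.mp hb) (hbnn x y)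
            rw [this, zero_mul]
            positivity
      _ = (N x).card * (Pn * α) := by rw [Finset.sum_const, nsmul_eq_mul]
      _ ≤ Dn * (Pn * α) := by
          have := hDn x hdd
          have h2 : (0:ℝ) ≤ Pn * α := mul_nonneg hPn0 hα
          nlinarith
      _ = α * Dn * Pn := by ring
  · push_neg at hex
    have : ∑ y ∈ N x, b x y * |c x y| = 0 :=
      Finset.sum_eq_zero fun y hy => by rw [hex y hy, abs_zero, mul_zero]
    rw [this]
    positivity

include hμ0 hμ hbnn hN hDn hPn hDn0 hPn0 hα hc1 hc2 in
/-- Pointwise bound for the weighted divergence. -/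
lemma dcS_norm : ∀ x, ‖dcS μ b N c x‖ ≤ μ₀⁻¹ * (α * Dn * Pn) := by
  intro x
  have hμx : 0 < μ x := lt_of_lt_of_le hμ0 (hμ x)
  have hrow := row_bound (V := V) b N dd n2 Dn Pn c α hbnn hN hDn hPn hDn0 hPn0 hα hc1 hc2
  rw [dcS, norm_mul, norm_inv, Complex.norm_real, Real.norm_eq_abs, abs_of_pos hμx]
  have h1 : ‖∑ y ∈ N x, ((b x y * c x y : ℝ) : ℂ)‖ ≤ ∑ y ∈ N x, b x y * |c x y| := by
    refine (norm_sum_le _ _).trans (le_of_eq (Finset.sum_congr rfl fun y _ => ?_))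
    rw [Complex.norm_real, Real.norm_eq_abs, abs_mul, abs_of_nonneg (hbnn x y)]
  calc (μ x)⁻¹ * ‖∑ y ∈ N x, ((b x y * c x y : ℝ) : ℂ)‖
      ≤ μ₀⁻¹ * (α * Dn * Pn) := by
        refine mul_le_mul (inv_anti₀ hμ0 (hμ x)) (h1.trans (hrow x)) (norm_nonneg _) ?_
        positivity

include hμ0 hμ hbsymm hbnn hN hDn hPn hDn0 hPn0 hF hα hc1 hc2 in
/-- Master operator estimate. -/
lemma masterM (f : V → ℂ) (hf : Summable fun x => μ x * ‖f x‖ ^ 2) :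
    nsS μ F2 (pcS μ b θ N c f) ≤
      4 * μ₀⁻¹ ^ 2 * (α * Dn * Pn) ^ 2 * ∑' x, μ x * ‖f x‖ ^ 2 := by
  classical
  have hbz : ∀ x y, y ∉ N x → b x y = 0 := fun x y hy =>
    le_antisymm (not_lt.mp fun h => hy ((hN x y).mpr h)) (hbnn x y)
  have hμx : ∀ x, 0 < μ x := fun x => lt_of_lt_of_le hμ0 (hμ x)
  have hμinv : ∀ x, (μ x)⁻¹ ≤ μ₀⁻¹ := fun x => inv_anti₀ hμ0 (hμ x)
  set κ := α * Dn * Pn with hκdef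
  have hκ0 : 0 ≤ κ := by positivity
  have hrow := row_bound (V := V) b N dd n2 Dn Pn c α hbnn hN hDn hPn hDn0 hPn0 hα hc1 hc2
  have hwnn : ∀ x y, 0 ≤ b x y * |c x y| := fun x y => mul_nonneg (hbnn x y) (abs_nonneg _)
  -- pointwise bound
  have key1 : ∀ x ∈ F2, μ x * ‖pcS μ b θ N c f x‖ ^ 2 ≤
      μ₀⁻¹ * κ * ∑ y ∈ N x, (b x y * |c x y|) * ‖f x - eθ θ x y * f y‖ ^ 2 := by
    intro x _
    have hnorm : ‖pcS μ b θ N c f x‖ ≤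
        (μ x)⁻¹ * ∑ y ∈ N x, (b x y * |c x y|) * ‖f x - eθ θ x y * f y‖ := by
      rw [pcS, norm_mul, norm_inv, Complex.norm_real, Real.norm_eq_abs,
        abs_of_pos (hμx x)]
      refine mul_le_mul_of_nonneg_left ?_ (inv_nonneg.mpr (le_of_lt (hμx x)))
      refine (norm_sum_le _ _).trans (Finset.sum_le_sum fun y _ => ?_)
      rw [norm_mul, Complex.norm_real, Real.norm_eq_abs, abs_mul,
        abs_of_nonneg (hbnn x y)]
    have hCS : (∑ y ∈ N x, (b x y * |c x y|) * ‖f x - eθ θ x y * f y‖) ^ 2 ≤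
        (∑ y ∈ N x, b x y * |c x y|) *
        (∑ y ∈ N x, (b x y * |c x y|) * ‖f x - eθ θ x y * f y‖ ^ 2) := by
      have h := Finset.sum_mul_sq_le_sq_mul_sq (N x)
        (fun y => Real.sqrt (b x y * |c x y|))
        (fun y => Real.sqrt (b x y * |c x y|) * ‖f x - eθ θ x y * f y‖)
      calc (∑ y ∈ N x, (b x y * |c x y|) * ‖f x - eθ θ x y * f y‖) ^ 2
          = (∑ y ∈ N x, Real.sqrt (b x y * |c x y|) *
              (Real.sqrt (b x y * |c x y|) * ‖f x - eθ θ x y * f y‖)) ^ 2 := by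
            congr 1
            refine Finset.sum_congr rfl fun y _ => ?_
            rw [← mul_assoc, Real.mul_self_sqrt (hwnn x y)]
        _ ≤ (∑ y ∈ N x, Real.sqrt (b x y * |c x y|) ^ 2) *
            (∑ y ∈ N x, (Real.sqrt (b x y * |c x y|) * ‖f x - eθ θ x y * f y‖) ^ 2) := h
        _ = (∑ y ∈ N x, b x y * |c x y|) *
            (∑ y ∈ N x, (b x y * |c x y|) * ‖f x - eθ θ x y * f y‖ ^ 2) := by
            congr 1
            · exact Finset.sum_congr rfl fun y _ => Real.sq_sqrt (hwnn x y)
            · refine Finset.sum_congr rfl fun y _ => ?_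
              rw [mul_pow, Real.sq_sqrt (hwnn x y)]
    have hZnn : 0 ≤ ∑ y ∈ N x, (b x y * |c x y|) * ‖f x - eθ θ x y * f y‖ ^ 2 :=
      Finset.sum_nonneg fun y _ => mul_nonneg (hwnn x y) (by positivity)
    have hnn1 : 0 ≤ ∑ y ∈ N x, (b x y * |c x y|) * ‖f x - eθ θ x y * f y‖ :=
      Finset.sum_nonneg fun y _ => mul_nonneg (hwnn x y) (norm_nonneg _)
    calc μ x * ‖pcS μ b θ N c f x‖ ^ 2
        ≤ μ x * ((μ x)⁻¹ * ∑ y ∈ N x, (b x y * |c x y|) * ‖f x - eθ θ x y * f y‖) ^ 2 := by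
          refine mul_le_mul_of_nonneg_left ?_ (le_of_lt (hμx x))
          exact pow_le_pow_left₀ (norm_nonneg _) hnorm 2
      _ = (μ x)⁻¹ * (∑ y ∈ N x, (b x y * |c x y|) * ‖f x - eθ θ x y * f y‖) ^ 2 := by
          rw [mul_pow]
          rw [show μ x * ((μ x)⁻¹ ^ 2 * (∑ y ∈ N x, (b x y * |c x y|) * ‖f x - eθ θ x y * f y‖) ^ 2)
              = (μ x * (μ x)⁻¹ ^ 2) * (∑ y ∈ N x, (b x y * |c x y|) * ‖f x - eθ θ x y * f y‖) ^ 2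
            from by ring]
          congr 1
          rw [pow_two, ← mul_assoc, mul_inv_cancel₀ (ne_of_gt (hμx x)), one_mul]
      _ ≤ (μ x)⁻¹ * ((∑ y ∈ N x, b x y * |c x y|) *
            (∑ y ∈ N x, (b x y * |c x y|) * ‖f x - eθ θ x y * f y‖ ^ 2)) := by
          exact mul_le_mul_of_nonneg_left hCS (inv_nonneg.mpr (le_of_lt (hμx x)))
      _ ≤ μ₀⁻¹ * (κ * (∑ y ∈ N x, (b x y * |c x y|) * ‖f x - eθ θ x y * f y‖ ^ 2)) := by
          refine mul_le_mul (hμinv x) ?_ ?_ (by positivity)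
          · exact mul_le_mul_of_nonneg_right (hrow x) hZnn
          · exact mul_nonneg (Finset.sum_nonneg fun y _ => hwnn x y) hZnn
      _ = μ₀⁻¹ * κ * ∑ y ∈ N x, (b x y * |c x y|) * ‖f x - eθ θ x y * f y‖ ^ 2 := by ring
  -- split the difference
  have hdiff : ∀ x y, ‖f x - eθ θ x y * f y‖ ^ 2 ≤ 2 * ‖f x‖ ^ 2 + 2 * ‖f y‖ ^ 2 := by
    intro x y
    have h1 : ‖f x - eθ θ x y * f y‖ ≤ ‖f x‖ + ‖f y‖ := by
      refine (norm_sub_le _ _).trans ?_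
      rw [norm_mul, eθ_norm, one_mul]
    have h2 : ‖f x - eθ θ x y * f y‖ ^ 2 ≤ (‖f x‖ + ‖f y‖) ^ 2 :=
      pow_le_pow_left₀ (norm_nonneg _) h1 2
    nlinarith [sq_nonneg (‖f x‖ - ‖f y‖)]
  -- column bound
  have hcol : ∀ y ∈ F2, ∑ x ∈ F2, b x y * |c x y| ≤ κ := by
    intro y _
    by_cases hex : ∃ x ∈ F2, 0 < b x y ∧ c x y ≠ 0
    · obtain ⟨x0, _, hb0, hc0⟩ := hex
      have hddy : dd y ≤ n2 := (hc2 x0 y hb0 hc0).2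
      calc ∑ x ∈ F2, b x y * |c x y| ≤ ∑ x ∈ F2, (if x ∈ N y then Pn * α else 0) := by
            refine Finset.sum_le_sum fun x _ => ?_
            by_cases hb : 0 < b x y
            · have hxy : x ∈ N y := (hN y x).mpr (by rw [← hbsymm x y]; exact hb)
              rw [if_pos hxy]
              refine mul_le_mul ?_ (hc1 x y hb) (abs_nonneg _) hPn0
              rw [hbsymm x y]
              exact hPn y x hddy
            · have : b x y = 0 := le_antisymm (not_lt.mp hb) (hbnn x y)
              rw [this, zero_mul]
              split <;> positivity
        _ = (F2 ∩ N y).card * (Pn * α) := by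
            rw [Finset.sum_ite_mem, Finset.sum_const, nsmul_eq_mul]
        _ ≤ Dn * (Pn * α) := by
            have h1 : ((F2 ∩ N y).card : ℝ) ≤ ((N y).card : ℝ) := by
              exact_mod_cast Finset.card_le_card (Finset.inter_subset_right)
            have h2 := hDn y hddy
            have h3 : (0:ℝ) ≤ Pn * α := mul_nonneg hPn0 hα
            nlinarith
        _ = κ := by ring
    · push_neg at hex
      have : ∑ x ∈ F2, b x y * |c x y| = 0 := by
        refine Finset.sum_eq_zero fun x hx => ?_
        by_cases hb : 0 < b x y
        · rw [hex x hx hb, abs_zero, mul_zero]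
        · rw [le_antisymm (not_lt.mp hb) (hbnn x y), zero_mul]
      rw [this]
      exact hκ0
  -- row-extension to F2
  have hext : ∀ x ∈ F2, ∑ y ∈ N x, (b x y * |c x y|) * ‖f y‖ ^ 2
      = ∑ y ∈ F2, (b x y * |c x y|) * ‖f y‖ ^ 2 := by
    intro x _
    have e1 : ∑ y ∈ N x, (b x y * |c x y|) * ‖f y‖ ^ 2
        = ∑ y ∈ N x ∪ F2, (b x y * |c x y|) * ‖f y‖ ^ 2 :=
      Finset.sum_subset Finset.subset_union_left
        (fun y _ hy => by rw [hbz x y hy, zero_mul, zero_mul])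
    have e2 : ∑ y ∈ F2, (b x y * |c x y|) * ‖f y‖ ^ 2
        = ∑ y ∈ N x ∪ F2, (b x y * |c x y|) * ‖f y‖ ^ 2 := by
      refine Finset.sum_subset Finset.subset_union_right fun y _ hy => ?_
      rcases eq_or_lt_of_le (hbnn x y) with hb | hb
      · rw [← hb, zero_mul, zero_mul]
      · by_cases hc : c x y = 0
        · rw [hc, abs_zero, mul_zero, zero_mul]
        · exact absurd (hF y (hc2 x y hb hc).2) hy
    rw [e1, e2]
  -- assemble
  have main : nsS μ F2 (pcS μ b θ N c f) ≤
      μ₀⁻¹ * κ * ∑ x ∈ F2, ∑ y ∈ N x, (b x y * |c x y|) * ‖f x - eθ θ x y * f y‖ ^ 2 := by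
    rw [nsS, Finset.mul_sum]
    exact Finset.sum_le_sum key1
  have split : ∑ x ∈ F2, ∑ y ∈ N x, (b x y * |c x y|) * ‖f x - eθ θ x y * f y‖ ^ 2
      ≤ 2 * κ * (∑ x ∈ F2, ‖f x‖ ^ 2) + 2 * κ * (∑ x ∈ F2, ‖f x‖ ^ 2) := by
    have h1 : ∑ x ∈ F2, ∑ y ∈ N x, (b x y * |c x y|) * ‖f x - eθ θ x y * f y‖ ^ 2
        ≤ ∑ x ∈ F2, (∑ y ∈ N x, (b x y * |c x y|) * (2 * ‖f x‖ ^ 2)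
            + ∑ y ∈ N x, (b x y * |c x y|) * (2 * ‖f y‖ ^ 2)) := by
      refine Finset.sum_le_sum fun x _ => ?_
      rw [← Finset.sum_add_distrib]
      refine Finset.sum_le_sum fun y _ => ?_
      rw [← mul_add]
      refine mul_le_mul_of_nonneg_left ?_ (hwnn x y)
      have := hdiff x y
      linarith
    refine h1.trans ?_
    rw [Finset.sum_add_distrib]
    have h2 : ∑ x ∈ F2, ∑ y ∈ N x, (b x y * |c x y|) * (2 * ‖f x‖ ^ 2)
        ≤ 2 * κ * ∑ x ∈ F2, ‖f x‖ ^ 2 := by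
      rw [Finset.mul_sum]
      refine Finset.sum_le_sum fun x _ => ?_
      rw [← Finset.sum_mul]
      have := hrow x
      nlinarith [Finset.sum_nonneg (fun y (_ : y ∈ N x) => hwnn x y), norm_nonneg (f x),
        sq_nonneg ‖f x‖]
    have h3 : ∑ x ∈ F2, ∑ y ∈ N x, (b x y * |c x y|) * (2 * ‖f y‖ ^ 2)
        ≤ 2 * κ * ∑ x ∈ F2, ‖f x‖ ^ 2 := by
      have hh : ∀ x ∈ F2, ∑ y ∈ N x, (b x y * |c x y|) * (2 * ‖f y‖ ^ 2)
          = ∑ y ∈ F2, (b x y * |c x y|) * (2 * ‖f y‖ ^ 2) := by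
        intro x hx
        have := hext x hx
        calc ∑ y ∈ N x, (b x y * |c x y|) * (2 * ‖f y‖ ^ 2)
            = 2 * ∑ y ∈ N x, (b x y * |c x y|) * ‖f y‖ ^ 2 := by
              rw [Finset.mul_sum]; exact Finset.sum_congr rfl fun y _ => by ring
          _ = 2 * ∑ y ∈ F2, (b x y * |c x y|) * ‖f y‖ ^ 2 := by rw [this]
          _ = ∑ y ∈ F2, (b x y * |c x y|) * (2 * ‖f y‖ ^ 2) := by
              rw [Finset.mul_sum]; exact Finset.sum_congr rfl fun y _ => by ring
      rw [Finset.sum_congr rfl hh, Finset.sum_comm]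
      rw [Finset.mul_sum]
      refine Finset.sum_le_sum fun y hy => ?_
      rw [← Finset.sum_mul]
      have := hcol y hy
      have hnn : 0 ≤ ∑ x ∈ F2, b x y * |c x y| :=
        Finset.sum_nonneg fun x _ => hwnn x y
      nlinarith [sq_nonneg ‖f y‖]
    linarith
  have hsumf : ∑ x ∈ F2, ‖f x‖ ^ 2 ≤ μ₀⁻¹ * ∑' x, μ x * ‖f x‖ ^ 2 := by
    have h1 : ∀ x ∈ F2, ‖f x‖ ^ 2 ≤ μ₀⁻¹ * (μ x * ‖f x‖ ^ 2) := by
      intro x _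
      have : (1:ℝ) ≤ μ₀⁻¹ * μ x := by
        rw [← div_eq_inv_mul, le_div_iff₀ hμ0, one_mul]
        exact hμ x
      nlinarith [sq_nonneg ‖f x‖]
    calc ∑ x ∈ F2, ‖f x‖ ^ 2 ≤ ∑ x ∈ F2, μ₀⁻¹ * (μ x * ‖f x‖ ^ 2) :=
          Finset.sum_le_sum h1
      _ = μ₀⁻¹ * ∑ x ∈ F2, μ x * ‖f x‖ ^ 2 := by rw [Finset.mul_sum]
      _ ≤ μ₀⁻¹ * ∑' x, μ x * ‖f x‖ ^ 2 := by
          refine mul_le_mul_of_nonneg_left ?_ (by positivity)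
          exact Summable.sum_le_tsum F2 (fun x _ => mul_nonneg (le_of_lt (hμx x)) (by positivity)) hf
  have hU0 : 0 ≤ ∑' x, μ x * ‖f x‖ ^ 2 :=
    tsum_nonneg fun x => mul_nonneg (le_of_lt (hμx x)) (by positivity)
  have hμi0 : 0 ≤ μ₀⁻¹ := by positivity
  calc nsS μ F2 (pcS μ b θ N c f)
      ≤ μ₀⁻¹ * κ * (2 * κ * (∑ x ∈ F2, ‖f x‖ ^ 2) + 2 * κ * (∑ x ∈ F2, ‖f x‖ ^ 2)) := by
        refine main.trans (mul_le_mul_of_nonneg_left split (by positivity))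
    _ = 4 * μ₀⁻¹ * κ ^ 2 * (∑ x ∈ F2, ‖f x‖ ^ 2) := by ring
    _ ≤ 4 * μ₀⁻¹ * κ ^ 2 * (μ₀⁻¹ * ∑' x, μ x * ‖f x‖ ^ 2) := by
        refine mul_le_mul_of_nonneg_left hsumf (by positivity)
    _ = 4 * μ₀⁻¹ ^ 2 * κ ^ 2 * ∑' x, μ x * ‖f x‖ ^ 2 := by ring

end Master



variable (μ : V → ℝ) (b θ : V → V → ℝ) (N : V → Finset V)

/-- Commutator identity: `Lap(ψ f) = ψ Lap f + f · dψ − P_ψ f`. -/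
lemma lap_decomp (ψr : V → ℝ) (f : V → ℂ) (x : V) :
    lapS μ b θ N (fun z => (ψr z : ℂ) * f z) x
      = (ψr x : ℂ) * lapS μ b θ N f x
        + f x * dcS μ b N (fun a a' => ψr a - ψr a') x
        - pcS μ b θ N (fun a a' => ψr a - ψr a') f x := by
  simp only [lapS, dcS, pcS]
  rw [show ∀ A B C : ℂ, (ψr x : ℂ) * ((μ x : ℂ)⁻¹ * A) + f x * ((μ x : ℂ)⁻¹ * B)
      - (μ x : ℂ)⁻¹ * C = (μ x : ℂ)⁻¹ * ((ψr x : ℂ) * A + f x * B - C)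
    from fun A B C => by ring]
  congr 1
  rw [Finset.mul_sum, Finset.mul_sum, ← Finset.sum_add_distrib, ← Finset.sum_sub_distrib]
  refine Finset.sum_congr rfl fun y _ => ?_
  push_cast
  ring

/-- Additivity of the Laplacian. -/
lemma lap_add (f g : V → ℂ) (x : V) :
    lapS μ b θ N (fun z => f z + g z) x = lapS μ b θ N f x + lapS μ b θ N g x := by
  simp only [lapS]
  rw [← mul_add, ← Finset.sum_add_distrib]
  congr 1
  refine Finset.sum_congr rfl fun y _ => by ring

lemma dc_split (ψr : V → ℝ) (x : V) :
    dcS μ b N (fun a a' => ψr a ^ 2 - ψr a' ^ 2) x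
      = 2 * (ψr x : ℂ) * dcS μ b N (fun a a' => ψr a - ψr a') x
        - dcS μ b N (fun a a' => (ψr a - ψr a') ^ 2) x := by
  simp only [dcS]
  rw [show ∀ A B : ℂ, 2 * (ψr x : ℂ) * ((μ x : ℂ)⁻¹ * A) - (μ x : ℂ)⁻¹ * B
      = (μ x : ℂ)⁻¹ * (2 * (ψr x : ℂ) * A - B) from fun A B => by ring]
  congr 1
  rw [Finset.mul_sum, ← Finset.sum_sub_distrib]
  refine Finset.sum_congr rfl fun y _ => ?_
  push_cast
  ring

lemma pc_split (ψr : V → ℝ) (f : V → ℂ) (x : V) :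
    pcS μ b θ N (fun a a' => ψr a ^ 2 - ψr a' ^ 2) f x
      = 2 * (ψr x : ℂ) * pcS μ b θ N (fun a a' => ψr a - ψr a') f x
        - pcS μ b θ N (fun a a' => (ψr a - ψr a') ^ 2) f x := by
  simp only [pcS]
  rw [show ∀ A B : ℂ, 2 * (ψr x : ℂ) * ((μ x : ℂ)⁻¹ * A) - (μ x : ℂ)⁻¹ * B
      = (μ x : ℂ)⁻¹ * (2 * (ψr x : ℂ) * A - B) from fun A B => by ring]
  congr 1
  rw [Finset.mul_sum, ← Finset.sum_sub_distrib]
  refine Finset.sum_congr rfl fun y _ => ?_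
  push_cast
  ring

/-- Split an inner product along a 3-term linear pointwise decomposition (right slot). -/
lemma ipS_split3R (F : Finset V) (f g g₁ g₂ g₃ : V → ℂ) (a₁ a₂ a₃ : ℝ)
    (h : ∀ x ∈ F, g x = (a₁ : ℂ) * g₁ x + (a₂ : ℂ) * g₂ x + (a₃ : ℂ) * g₃ x) :
    ipS μ F f g = (a₁ : ℂ) * ipS μ F f g₁ + (a₂ : ℂ) * ipS μ F f g₂
      + (a₃ : ℂ) * ipS μ F f g₃ := by
  simp only [ipS, Finset.mul_sum, ← Finset.sum_add_distrib]
  refine Finset.sum_congr rfl fun x hx => ?_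
  rw [h x hx]
  simp only [map_add, map_mul, Complex.conj_ofReal]
  ring

/-- Split an inner product along a 3-term linear pointwise decomposition (left slot). -/
lemma ipS_split3L (F : Finset V) (f f₁ f₂ f₃ g : V → ℂ) (a₁ a₂ a₃ : ℝ)
    (h : ∀ x ∈ F, f x = (a₁ : ℂ) * f₁ x + (a₂ : ℂ) * f₂ x + (a₃ : ℂ) * f₃ x) :
    ipS μ F f g = (a₁ : ℂ) * ipS μ F f₁ g + (a₂ : ℂ) * ipS μ F f₂ g
      + (a₃ : ℂ) * ipS μ F f₃ g := by
  simp only [ipS, Finset.mul_sum, ← Finset.sum_add_distrib]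
  refine Finset.sum_congr rfl fun x hx => ?_
  rw [h x hx]
  ring

/-- Move a real multiplier across the inner product. -/
lemma ipS_real_move (F : Finset V) (ψr : V → ℝ) (f g : V → ℂ) :
    ipS μ F f (fun x => (ψr x : ℂ) * g x) = ipS μ F (fun x => (ψr x : ℂ) * f x) g := by
  simp only [ipS]
  refine Finset.sum_congr rfl fun x _ => ?_
  rw [map_mul, Complex.conj_ofReal]
  ring

lemma ipS_congr (F : Finset V) (f g g' : V → ℂ) (h : ∀ x ∈ F, g x = g' x) :
    ipS μ F f g = ipS μ F f g' := by
  simp only [ipS]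
  exact Finset.sum_congr rfl fun x hx => by rw [h x hx]

/-- The `Re` of the inner product against `ψ² h` is the squared norm of `ψ h`. -/
lemma re_ip_sq (F : Finset V) (ψr : V → ℝ) (hψ : ∀ x, 0 ≤ ψr x) (h : V → ℂ) :
    (ipS μ F h (fun x => ((ψr x ^ 2 : ℝ) : ℂ) * h x)).re
      = nsS μ F (fun x => (ψr x : ℂ) * h x) := by
  rw [ipS, nsS, Complex.re_sum]
  refine Finset.sum_congr rfl fun x _ => ?_
  rw [map_mul, Complex.conj_ofReal]
  rw [show (μ x : ℂ) * h x * (((ψr x ^ 2 : ℝ) : ℂ) * (starRingEnd ℂ) (h x))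
      = ((μ x * ψr x ^ 2 : ℝ) : ℂ) * (h x * (starRingEnd ℂ) (h x)) from by push_cast; ring]
  rw [Complex.mul_conj, ← Complex.ofReal_mul, Complex.ofReal_re]
  rw [Complex.normSq_eq_norm_sq]
  rw [norm_mul, Complex.norm_real, Real.norm_eq_abs, abs_of_nonneg (hψ x)]
  ring

lemma nsS_ptwise_le (F : Finset V) (hμnn : ∀ x, 0 ≤ μ x) (f g : V → ℂ) (M : ℝ)
    (hM : 0 ≤ M) (h : ∀ x ∈ F, ‖g x‖ ≤ M * ‖f x‖) :
    nsS μ F g ≤ M ^ 2 * nsS μ F f := by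
  rw [nsS, nsS, Finset.mul_sum]
  refine Finset.sum_le_sum fun x hx => ?_
  have h2 : ‖g x‖ ^ 2 ≤ (M * ‖f x‖) ^ 2 := pow_le_pow_left₀ (norm_nonneg _) (h x hx) 2
  rw [mul_pow] at h2
  calc μ x * ‖g x‖ ^ 2 ≤ μ x * (M ^ 2 * ‖f x‖ ^ 2) :=
        mul_le_mul_of_nonneg_left h2 (hμnn x)
    _ = M ^ 2 * (μ x * ‖f x‖ ^ 2) := by ring






lemma sqrt_bound {x c u2 : ℝ} (hu : 0 ≤ u2) (hc : 0 ≤ c) (h : x ≤ c ^ 2 * u2) :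
    Real.sqrt x ≤ c * Real.sqrt u2 := by
  have h2 : c ^ 2 * u2 = (c * Real.sqrt u2) ^ 2 := by
    rw [mul_pow, Real.sq_sqrt hu]
  calc Real.sqrt x ≤ Real.sqrt (c ^ 2 * u2) := Real.sqrt_le_sqrt h
    _ = c * Real.sqrt u2 := by rw [h2, Real.sqrt_sq (by positivity)]

lemma nsS_congr (μ : V → ℝ) (F : Finset V) (f g : V → ℂ) (h : ∀ x ∈ F, f x = g x) :
    nsS μ F f = nsS μ F g :=
  Finset.sum_congr rfl fun x hx => by rw [h x hx]



end
end KeyAux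

set_option maxHeartbeats 2000000 in
open KeyAux in
/-- Key a priori bound (Proposition 4): if `β_n ≤ C₁ < 1` for `n ≥ N₁` and
`u ∈ ℓ²(V,μ)` satisfies `Δ_θ²u + Wu = iλu` with `W ≥ −q∘r`, then there is a constant
`C` independent of `n` with `‖Δ_θ(χ_n u)‖² ≤ C (β_n ‖u‖² + ((q∘r)χ_n u, χ_n u))`. -/
theorem key_apriori_bound {V : Type*} [Countable V]
    (μ : V → ℝ) (μ₀ : ℝ) (b : V → V → ℝ) (θ : V → V → ℝ)
    (G : SimpleGraph V) (x₀ : V) (D P : ℕ → ℝ)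
    (hμ0 : 0 < μ₀) (hμ : ∀ x, μ₀ ≤ μ x)
    (hbsymm : ∀ x y, b x y = b y x) (hbnn : ∀ x y, 0 ≤ b x y) (hbdiag : ∀ x, b x x = 0)
    (hloc : ∀ x, {y | 0 < b x y}.Finite)
    (hG : ∀ x y, G.Adj x y ↔ 0 < b x y) (hconn : G.Connected)
    (hθ : ∀ x y, θ x y = -θ y x) (hθbd : ∀ x y, |θ x y| ≤ Real.pi)
    (hD : ∀ (m : ℕ) (x : V), G.dist x₀ x ≤ m → ({y | 0 < b x y}.ncard : ℝ) ≤ D m)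
    (hP : ∀ (m : ℕ) (x y : V), G.dist x₀ x ≤ m → b x y ≤ P m)
    (q : ℝ → ℝ) (hqpos : ∀ s, 0 ≤ s → 0 < q s)
    (hqmono : ∀ s t, 0 ≤ s → s ≤ t → q s ≤ q t)
    (W : V → ℝ) (hW : ∀ x, -q (G.dist x₀ x) ≤ W x)
    (C₁ : ℝ) (hC₁0 : 0 < C₁) (hC₁1 : C₁ < 1) (N₁ : ℕ) (hN₁ : 1 ≤ N₁)
    (hβ : ∀ n : ℕ, N₁ ≤ n → D (2 * n) * P (2 * n) / (μ₀ * n) ≤ C₁)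
    (lam : ℝ) (u : V → ℂ) (hu : Summable fun x => μ x * ‖u x‖ ^ 2)
    (hHu : Summable fun x =>
      μ x * ‖magLap μ b θ (magLap μ b θ u) x + (W x : ℂ) * u x‖ ^ 2)
    (heq : ∀ x, magLap μ b θ (magLap μ b θ u) x + (W x : ℂ) * u x
      = (lam : ℂ) * Complex.I * u x) :
    ∃ C : ℝ, ∀ n : ℕ, N₁ ≤ n →
      wnormSq μ (magLap μ b θ (fun x => (cutoff (fun z => G.dist x₀ z) n x : ℂ) * u x))
        ≤ C * ((D (2 * n) * P (2 * n) / (μ₀ * n)) * wnormSq μ u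
            + ∑' x, μ x * q (G.dist x₀ x) *
                (cutoff (fun z => G.dist x₀ z) n x) ^ 2 * ‖u x‖ ^ 2) := by
  classical
  refine ⟨236, fun n hn => ?_⟩
  have hn1 : 1 ≤ n := le_trans hN₁ hn
  have hnR : (0:ℝ) < (n:ℝ) := by exact_mod_cast hn1
  -- basic positivity
  have hμx : ∀ x, 0 < μ x := fun x => lt_of_lt_of_le hμ0 (hμ x)
  have hμnn : ∀ x, 0 ≤ μ x := fun x => le_of_lt (hμx x)
  -- neighbours
  set N : V → Finset V := fun x => (hloc x).toFinset with hNdef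
  have hN : ∀ x y, y ∈ N x ↔ 0 < b x y := fun x y => by
    simp [hNdef, Set.Finite.mem_toFinset]
  have hbz : ∀ x y, y ∉ N x → b x y = 0 := fun x y hy =>
    le_antisymm (not_lt.mp fun h => hy ((hN x y).mpr h)) (hbnn x y)
  -- distance function
  set dd : V → ℕ := fun z => G.dist x₀ z with hdddef
  have hadj : ∀ x y, 0 < b x y → dd y ≤ dd x + 1 := by
    intro x y hb
    have hA : G.Adj x y := (hG x y).mpr hb
    have h1 : G.dist x₀ y ≤ G.dist x₀ x + G.dist x y := hconn.dist_triangle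
    have h2 : G.dist x y ≤ 1 := by
      have := SimpleGraph.dist_le hA.toWalk
      simpa using this
    simp only [hdddef]
    omega
  have hadj' : ∀ x y, 0 < b x y → dd x ≤ dd y + 1 := fun x y hb =>
    hadj y x (by rw [← hbsymm x y]; exact hb)
  -- finite balls
  have hball : ∀ m : ℕ, {x | G.dist x₀ x ≤ m}.Finite :=
    KeyAux.ball_finite G hconn
      (fun x => (hloc x).subset fun y hy => (hG x y).mp hy) x₀
  set B0 : Finset V := (hball (2*n)).toFinset with hB0def
  have hB0 : ∀ x, x ∈ B0 ↔ dd x ≤ 2*n := fun x => by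
    simp [hB0def, Set.Finite.mem_toFinset, hdddef]
  set F1 : Finset V := B0 ∪ B0.biUnion N with hF1def
  set F2 : Finset V := F1 ∪ F1.biUnion N with hF2def
  have hB0F1 : B0 ⊆ F1 := Finset.subset_union_left
  have hF12 : F1 ⊆ F2 := Finset.subset_union_left
  have hNT : ∀ x ∈ B0, N x ⊆ F1 := fun x hx y hy =>
    Finset.mem_union_right _ (Finset.mem_biUnion.mpr ⟨x, hx, hy⟩)
  have hN1 : ∀ x ∈ F1, N x ⊆ F2 := fun x hx y hy =>
    Finset.mem_union_right _ (Finset.mem_biUnion.mpr ⟨x, hx, hy⟩)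
  have hF : ∀ x, dd x ≤ 2*n → x ∈ F2 := fun x hx =>
    hF12 (hB0F1 ((hB0 x).mpr hx))
  -- magLap agrees with the finite-sum Laplacian
  have lap_eq_mag : ∀ (f : V → ℂ) x, magLap μ b θ f x = lapS μ b θ N f x := by
    intro f x
    rw [magLap, lapS]
    congr 1
    refine tsum_eq_sum fun y hy => ?_
    rw [hbz x y hy]
    simp
  -- cut-offs
  set χ : V → ℝ := cutoff (fun z => G.dist x₀ z) n with hχdef
  set ψ : V → ℝ := fun x => min (max ((2*(n:ℝ) - 1 - (dd x : ℝ)) / (n:ℝ)) 0) 1 with hψdef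
  have hχx : ∀ x, χ x = min (max ((2*(n:ℝ) - (dd x : ℝ)) / (n:ℝ)) 0) 1 := fun x => rfl
  have hχ0 : ∀ x, 0 ≤ χ x := fun x => by
    rw [hχx x]; exact le_min (le_max_right _ _) zero_le_one
  have hψ0 : ∀ x, 0 ≤ ψ x := fun x => by
    simp only [hψdef]; exact le_min (le_max_right _ _) zero_le_one
  have hχ1 : ∀ x, χ x ≤ 1 := fun x => by rw [hχx x]; exact min_le_right _ _
  have hψleχ : ∀ x, ψ x ≤ χ x := by
    intro x
    rw [hχx x, hψdef]
    refine min_le_min (max_le_max ?_ le_rfl) le_rfl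
    have h0 : (2*(n:ℝ) - 1 - (dd x : ℝ)) ≤ (2*(n:ℝ) - (dd x : ℝ)) := by linarith
    exact div_le_div_of_nonneg_right h0 (le_of_lt hnR)
  have hχzero : ∀ x, 2*n ≤ dd x → χ x = 0 := by
    intro x hx
    rw [hχx x]
    have h1 : (2*(n:ℝ) - (dd x : ℝ)) / (n:ℝ) ≤ 0 := by
      apply div_nonpos_of_nonpos_of_nonneg ?_ (le_of_lt hnR)
      have : (2*n : ℝ) ≤ (dd x : ℝ) := by exact_mod_cast hx
      linarith
    rw [max_eq_right h1, min_eq_left zero_le_one]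
  have hψzero : ∀ x, 2*n ≤ dd x + 1 → ψ x = 0 := by
    intro x hx
    simp only [hψdef]
    have h1 : (2*(n:ℝ) - 1 - (dd x : ℝ)) / (n:ℝ) ≤ 0 := by
      apply div_nonpos_of_nonpos_of_nonneg ?_ (le_of_lt hnR)
      have : (2*n : ℝ) ≤ (dd x : ℝ) + 1 := by exact_mod_cast hx
      linarith
    rw [max_eq_right h1, min_eq_left zero_le_one]
  have hχsupp : ∀ x, χ x ≠ 0 → dd x + 1 ≤ 2*n := by
    intro x hx
    by_contra h
    exact hx (hχzero x (by omega))
  have hψsupp : ∀ x, ψ x ≠ 0 → dd x + 2 ≤ 2*n := by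
    intro x hx
    by_contra h
    exact hx (hψzero x (by omega))
  have hddlip : ∀ x y, 0 < b x y → |(dd x : ℝ) - (dd y : ℝ)| ≤ 1 := by
    intro x y hb
    have h1 := hadj x y hb
    have h2 := hadj' x y hb
    rw [abs_sub_le_iff]
    constructor <;> [skip; skip] <;>
      (first
        | (have : (dd x : ℝ) ≤ (dd y : ℝ) + 1 := by exact_mod_cast h2
           linarith)
        | (have : (dd y : ℝ) ≤ (dd x : ℝ) + 1 := by exact_mod_cast h1
           linarith))
  have hψlip : ∀ x y, 0 < b x y → |ψ x - ψ y| ≤ 1/(n:ℝ) := by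
    intro x y hb
    simp only [hψdef]
    refine (KeyAux.clamp_abs_sub _ _).trans ?_
    rw [div_sub_div_same, abs_div, abs_of_pos hnR]
    refine div_le_div_of_nonneg_right ?_ (le_of_lt hnR)
    have := hddlip x y hb
    rw [show (2*(n:ℝ) - 1 - (dd x:ℝ)) - (2*(n:ℝ) - 1 - (dd y:ℝ)) = -((dd x:ℝ) - (dd y:ℝ)) by ring,
      abs_neg]
    exact this
  have hχψ : ∀ x, |χ x - ψ x| ≤ 1/(n:ℝ) := by
    intro x
    rw [hχx x, hψdef]
    refine (KeyAux.clamp_abs_sub _ _).trans ?_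
    rw [div_sub_div_same, abs_div, abs_of_pos hnR]
    refine div_le_div_of_nonneg_right ?_ (le_of_lt hnR)
    rw [show (2*(n:ℝ) - (dd x:ℝ)) - (2*(n:ℝ) - 1 - (dd x:ℝ)) = 1 by ring, abs_one]
  -- support of the ψ-gradient
  have hcd : ∀ x y, 0 < b x y → ψ x - ψ y ≠ 0 → dd x + 1 ≤ 2*n ∧ dd y + 1 ≤ 2*n := by
    intro x y hb hne
    rcases ne_or_eq (ψ x) 0 with h | h
    · have h1 := hψsupp x h
      have h2 := hadj x y hb
      omega
    · have h' : ψ y ≠ 0 := fun hy => hne (by rw [h, hy, sub_zero])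
      have h1 := hψsupp y h'
      have h2 := hadj' x y hb
      omega
  -- degree and weight bounds
  set Dn : ℝ := D (2*n) with hDndef
  set Pn : ℝ := P (2*n) with hPndef
  have hDn : ∀ x, dd x ≤ 2*n → ((N x).card : ℝ) ≤ Dn := by
    intro x hx
    have h1 := hD (2*n) x hx
    have h2 : {y | 0 < b x y}.ncard = (N x).card := by
      rw [hNdef]
      exact Set.ncard_eq_toFinset_card _ (hloc x)
    rw [h2] at h1
    exact_mod_cast h1
  have hPn : ∀ x y, dd x ≤ 2*n → b x y ≤ Pn := fun x y hx => hP (2*n) x y hx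
  have hDn0 : 0 ≤ Dn := by
    have h1 := hD (2*n) x₀ (by simp [SimpleGraph.dist_self])
    have h2 : (0:ℝ) ≤ ({y | 0 < b x₀ y}.ncard : ℝ) := by positivity
    linarith
  have hPn0 : 0 ≤ Pn := by
    have h1 := hP (2*n) x₀ x₀ (by simp [SimpleGraph.dist_self])
    rw [hbdiag x₀] at h1
    exact h1
  set β : ℝ := Dn * Pn / (μ₀ * n) with hβdef
  have hβnn : 0 ≤ β := by positivity
  have hβC₁ : β ≤ C₁ := hβ n hn
  have hβ1 : β ≤ 1 := le_of_lt (lt_of_le_of_lt hβC₁ hC₁1)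
  -- norms
  set U2 : ℝ := wnormSq μ u with hU2def
  have hU2t : U2 = ∑' x, μ x * ‖u x‖^2 := rfl
  have hU0 : 0 ≤ U2 := by
    rw [hU2t]
    exact tsum_nonneg fun x => mul_nonneg (hμnn x) (by positivity)
  set τ : ℝ := β * Real.sqrt U2 with hτdef
  have hτ0 : 0 ≤ τ := mul_nonneg hβnn (Real.sqrt_nonneg _)
  have hτsq : τ^2 = β^2 * U2 := by rw [hτdef, mul_pow, Real.sq_sqrt hU0]
  -- coefficient functions
  set cψ : V → V → ℝ := fun a a' => ψ a - ψ a' with hcψdef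
  set cψ2 : V → V → ℝ := fun a a' => (ψ a - ψ a') ^ 2 with hcψ2def
  set csq : V → V → ℝ := fun a a' => ψ a ^ 2 - ψ a' ^ 2 with hcsqdef
  have hc1ψ : ∀ x y, 0 < b x y → |cψ x y| ≤ 1/(n:ℝ) := fun x y hb => hψlip x y hb
  have hc2ψ : ∀ x y, 0 < b x y → cψ x y ≠ 0 → dd x ≤ 2*n ∧ dd y ≤ 2*n := by
    intro x y hb hne
    have := hcd x y hb hne
    omega
  have hc1ψ2 : ∀ x y, 0 < b x y → |cψ2 x y| ≤ 1/(n:ℝ)^2 := by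
    intro x y hb
    simp only [hcψ2def]
    rw [abs_pow]
    calc |ψ x - ψ y| ^ 2 ≤ (1/(n:ℝ)) ^ 2 :=
          pow_le_pow_left₀ (abs_nonneg _) (hψlip x y hb) 2
      _ = 1/(n:ℝ)^2 := by rw [div_pow, one_pow]
  have hc2ψ2 : ∀ x y, 0 < b x y → cψ2 x y ≠ 0 → dd x ≤ 2*n ∧ dd y ≤ 2*n := by
    intro x y hb hne
    refine hc2ψ x y hb fun h => hne ?_
    simp only [hcψ2def, hcψdef] at h ⊢
    rw [h]
    ring
  -- main functions
  set Lu : V → ℂ := lapS μ b θ N u with hLudef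
  set dψ : V → ℂ := dcS μ b N cψ with hdψdef
  set Γf : V → ℂ := dcS μ b N cψ2 with hΓdef
  set Pψu : V → ℂ := pcS μ b θ N cψ u with hPψudef
  set Eu : V → ℂ := pcS μ b θ N cψ2 u with hEudef
  set ψu : V → ℂ := fun x => (ψ x : ℂ) * u x with hψudef
  set χu : V → ℂ := fun x => (χ x : ℂ) * u x with hχudef
  set gd : V → ℂ := fun x => ((χ x - ψ x : ℝ) : ℂ) * u x with hgddef
  set ψLu : V → ℂ := fun x => (ψ x : ℂ) * Lu x with hψLudef
  set udψ : V → ℂ := fun x => u x * dψ x with hudψdef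
  set uΓ : V → ℂ := fun x => u x * Γf x with huΓdef
  set A : ℝ := nsS μ F2 ψLu with hAdef
  set S' : ℝ := nsS μ F2 (lapS μ b θ N ψu) with hS'def
  have hA0 : 0 ≤ A := KeyAux.nsS_nonneg μ hμnn F2 ψLu
  have hS'0 : 0 ≤ S' := KeyAux.nsS_nonneg μ hμnn F2 _
  -- summability and tsum conversion for finitely supported functions
  have hsum_fin : ∀ g : V → ℂ, (∀ x, g x ≠ 0 → dd x ≤ 2*n) →
      Summable (fun x => μ x * ‖g x‖^2) := by
    intro g hs
    refine summable_of_ne_finset_zero (s := F2) fun x hx => ?_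
    have hg0 : g x = 0 := by
      by_contra h
      exact hx (hF x (hs x h))
    rw [hg0]
    simp
  have hwn_eq : ∀ g : V → ℂ, (∀ x, g x ≠ 0 → dd x ≤ 2*n) →
      wnormSq μ g = nsS μ F2 g := by
    intro g hs
    refine tsum_eq_sum fun x hx => ?_
    have hg0 : g x = 0 := by
      by_contra h
      exact hx (hF x (hs x h))
    rw [hg0]
    simp
  -- support facts
  have hΓsupp : ∀ x, Γf x ≠ 0 → dd x + 1 ≤ 2*n := by
    intro x hx
    simp only [hΓdef, dcS] at hx
    have hsne : ∑ y ∈ N x, ((b x y * cψ2 x y : ℝ) : ℂ) ≠ 0 := by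
      intro h
      rw [h, mul_zero] at hx
      exact hx rfl
    obtain ⟨y, hyN, hy0⟩ := Finset.exists_ne_zero_of_sum_ne_zero hsne
    have hbc : b x y * cψ2 x y ≠ 0 := fun h => hy0 (by rw [h]; simp)
    have hb : 0 < b x y := (hN x y).mp hyN
    have hc : cψ2 x y ≠ 0 := fun h => hbc (by rw [h, mul_zero])
    have hcc : cψ x y ≠ 0 := by
      intro h
      refine hc ?_
      simp only [hcψ2def, hcψdef] at h ⊢
      rw [h]
      ring
    exact (hcd x y hb hcc).1
  have hEsupp : ∀ x, Eu x ≠ 0 → dd x + 1 ≤ 2*n := by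
    intro x hx
    simp only [hEudef, pcS] at hx
    have hsne : ∑ y ∈ N x, ((b x y * cψ2 x y : ℝ) : ℂ) * (u x - eθ θ x y * u y) ≠ 0 := by
      intro h
      rw [h, mul_zero] at hx
      exact hx rfl
    obtain ⟨y, hyN, hy0⟩ := Finset.exists_ne_zero_of_sum_ne_zero hsne
    have hbc : b x y * cψ2 x y ≠ 0 := by
      intro h
      refine hy0 ?_
      rw [h]
      simp
    have hb : 0 < b x y := (hN x y).mp hyN
    have hc : cψ x y ≠ 0 := by
      intro h
      refine hbc ?_
      have : cψ2 x y = 0 := by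
        simp only [hcψ2def, hcψdef] at h ⊢
        rw [h]
        ring
      rw [this, mul_zero]
    exact (hcd x y hb hc).1
  have hgdsupp : ∀ x, gd x ≠ 0 → dd x + 1 ≤ 2*n := by
    intro x hx
    have hne : χ x - ψ x ≠ 0 := by
      intro h
      refine hx ?_
      simp only [hgddef, h]
      simp
    rcases ne_or_eq (χ x) 0 with h | h
    · exact hχsupp x h
    · have : ψ x ≠ 0 := fun h2 => hne (by rw [h, h2, sub_zero])
      have := hψsupp x this
      omega
  have hχusupp : ∀ x, χu x ≠ 0 → dd x + 1 ≤ 2*n := by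
    intro x hx
    refine hχsupp x fun h => hx ?_
    simp only [hχudef, h]
    simp
  have hψusupp : ∀ x, ψu x ≠ 0 → dd x + 1 ≤ 2*n := by
    intro x hx
    have : ψ x ≠ 0 := by
      intro h
      refine hx ?_
      simp only [hψudef, h]
      simp
    have := hψsupp x this
    omega
  -- lap support
  have hlap_supp : ∀ (g : V → ℂ), (∀ x, g x ≠ 0 → dd x + 1 ≤ 2*n) →
      ∀ x, x ∉ F2 → lapS μ b θ N g x = 0 := by
    intro g hs x hx
    have hxd : ¬ dd x ≤ 2*n := fun h => hx (hF x h)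
    have hgx : g x = 0 := by
      by_contra h
      have := hs x h
      omega
    have hgy : ∀ y ∈ N x, g y = 0 := by
      intro y hy
      by_contra h
      have h1 := hs y h
      have h2 := hadj' x y ((hN x y).mp hy)
      omega
    rw [lapS, Finset.sum_eq_zero fun y hy => by rw [hgx, hgy y hy]; ring, mul_zero]
  -- Green's formula
  have hgreen : ∀ (f g : V → ℂ), (∀ x, g x ≠ 0 → dd x ≤ 2*n) →
      ipS μ F2 (lapS μ b θ N f) g = ipS μ F2 f (lapS μ b θ N g) := by
    intro f g hs
    exact KeyAux.green μ μ₀ b θ N hμ0 hμ hbsymm hbnn hθ hN B0 F1 F2 hB0F1 hF12 hNT hN1 f g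
      (fun x hx => (hB0 x).mpr (hs x hx))
  -- Cauchy-Schwarz
  have hCS : ∀ f g : V → ℂ, ‖ipS μ F2 f g‖ ≤
      Real.sqrt (nsS μ F2 f) * Real.sqrt (nsS μ F2 g) :=
    fun f g => KeyAux.ipS_abs_le μ hμnn F2 f g
  have hre : ∀ z : ℂ, |z.re| ≤ ‖z‖ := fun z => by
    exact Complex.abs_re_le_norm z
  -- basic u-norm facts
  have hnsu : nsS μ F2 u ≤ U2 := by
    rw [hU2t]
    exact Summable.sum_le_tsum F2 (fun x _ => mul_nonneg (hμnn x) (by positivity)) hu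
  have hsqrtu : Real.sqrt (nsS μ F2 u) ≤ Real.sqrt U2 := Real.sqrt_le_sqrt hnsu
  -- pointwise-to-weighted-norm bound
  have wn_ptwise : ∀ (g : V → ℂ) (m : ℝ), 0 ≤ m → (∀ x, ‖g x‖ ≤ m * ‖u x‖) →
      wnormSq μ g ≤ m^2 * U2 := by
    intro g m hm hpt
    have hdom : ∀ x, μ x * ‖g x‖^2 ≤ m^2 * (μ x * ‖u x‖^2) := by
      intro x
      have h2 : ‖g x‖^2 ≤ m^2 * ‖u x‖^2 := by
        have := pow_le_pow_left₀ (norm_nonneg (g x)) (hpt x) 2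
        rw [mul_pow] at this
        exact this
      calc μ x * ‖g x‖^2 ≤ μ x * (m^2 * ‖u x‖^2) :=
            mul_le_mul_of_nonneg_left h2 (hμnn x)
        _ = m^2 * (μ x * ‖u x‖^2) := by ring
    have hsg : Summable (fun x => μ x * ‖g x‖^2) := by
      refine Summable.of_nonneg_of_le (fun x => mul_nonneg (hμnn x) (by positivity)) hdom ?_
      exact hu.mul_left _
    calc wnormSq μ g ≤ ∑' x, m^2 * (μ x * ‖u x‖^2) :=
          Summable.tsum_le_tsum hdom hsg (hu.mul_left _)
      _ = m^2 * U2 := by rw [tsum_mul_left, hU2t]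
  -- bounds on dψ and Γ
  have hdψbd : ∀ x, ‖dψ x‖ ≤ β := by
    intro x
    have h := KeyAux.dcS_norm μ μ₀ b N dd (2*n) Dn Pn cψ (1/(n:ℝ)) hμ0 hμ hbnn hN hDn hPn
      hDn0 hPn0 (by positivity) hc1ψ hc2ψ x
    refine h.trans (le_of_eq ?_)
    rw [hβdef]
    ring
  have hΓbd : ∀ x, ‖Γf x‖ ≤ β/(n:ℝ) := by
    intro x
    have h := KeyAux.dcS_norm μ μ₀ b N dd (2*n) Dn Pn cψ2 (1/(n:ℝ)^2) hμ0 hμ hbnn hN hDn hPn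
      hDn0 hPn0 (by positivity) hc1ψ2 hc2ψ2 x
    refine h.trans (le_of_eq ?_)
    rw [hβdef]
    ring
  -- master instances for Pψu and Eu
  have hPψu_sqrt : Real.sqrt (nsS μ F2 Pψu) ≤ 2*τ := by
    have h := KeyAux.masterM μ μ₀ b θ N dd (2*n) Dn Pn F2 cψ (1/(n:ℝ)) hμ0 hμ hbsymm hbnn hN
      hDn hPn hDn0 hPn0 hF (by positivity) hc1ψ hc2ψ u hu
    have hco : 4 * μ₀⁻¹^2 * ((1/(n:ℝ)) * Dn * Pn)^2 = (2*β)^2 := by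
      rw [hβdef]
      ring
    rw [hco, ← hU2t] at h
    have := KeyAux.sqrt_bound hU0 (by positivity : (0:ℝ) ≤ 2*β) h
    calc Real.sqrt (nsS μ F2 Pψu) ≤ 2*β * Real.sqrt U2 := this
      _ = 2*τ := by rw [hτdef]; ring
  have hEu_wn : wnormSq μ Eu ≤ (2*β/(n:ℝ))^2 * U2 := by
    have h := KeyAux.masterM μ μ₀ b θ N dd (2*n) Dn Pn F2 cψ2 (1/(n:ℝ)^2) hμ0 hμ hbsymm hbnn hN
      hDn hPn hDn0 hPn0 hF (by positivity) hc1ψ2 hc2ψ2 u hu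
    have hco : 4 * μ₀⁻¹^2 * ((1/(n:ℝ)^2) * Dn * Pn)^2 = (2*β/(n:ℝ))^2 := by
      rw [hβdef]
      ring
    have hEns : wnormSq μ Eu = nsS μ F2 Eu :=
      hwn_eq Eu (fun x hx => by have := hEsupp x hx; omega)
    rw [hEns]
    refine h.trans (le_of_eq ?_)
    rw [hco, ← hU2t]
  -- the Laplacian-of-supported-function bound
  have lapb : ∀ (g : V → ℂ) (w2 : ℝ), 0 ≤ w2 → (∀ x, g x ≠ 0 → dd x + 1 ≤ 2*n) →
      wnormSq μ g ≤ w2^2 * U2 →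
      Real.sqrt (nsS μ F2 (lapS μ b θ N g)) ≤ (2*(Dn*Pn)*μ₀⁻¹*w2) * Real.sqrt U2 := by
    intro g w2 hw2 hsupp hwn
    set cg : V → V → ℝ := fun a a' => if g a ≠ 0 ∨ g a' ≠ 0 then 1 else 0 with hcgdef
    have hpt : ∀ x ∈ F2, lapS μ b θ N g x = pcS μ b θ N cg g x := by
      intro x _
      rw [lapS, pcS]
      congr 1
      refine Finset.sum_congr rfl fun y _ => ?_
      by_cases hcase : g x ≠ 0 ∨ g y ≠ 0
      · simp only [hcgdef, if_pos hcase, mul_one]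
      · have hx0 : g x = 0 := by
          by_contra h
          exact hcase (Or.inl h)
        have hy0 : g y = 0 := by
          by_contra h
          exact hcase (Or.inr h)
        simp only [hcgdef, if_neg hcase, hx0, hy0]
        simp
    have h1 : nsS μ F2 (lapS μ b θ N g) = nsS μ F2 (pcS μ b θ N cg g) :=
      KeyAux.nsS_congr μ F2 _ _ hpt
    have hc1g : ∀ x y, 0 < b x y → |cg x y| ≤ 1 := by
      intro x y _
      simp only [hcgdef]
      split <;> simp
    have hc2g : ∀ x y, 0 < b x y → cg x y ≠ 0 → dd x ≤ 2*n ∧ dd y ≤ 2*n := by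
      intro x y hb hne
      have hcase : g x ≠ 0 ∨ g y ≠ 0 := by
        by_contra h
        exact hne (by simp only [hcgdef, if_neg h])
      rcases hcase with h | h
      · have h1 := hsupp x h
        have h2 := hadj x y hb
        omega
      · have h1 := hsupp y h
        have h2 := hadj' x y hb
        omega
    have hgsum : Summable (fun x => μ x * ‖g x‖^2) :=
      hsum_fin g (fun x hx => by have := hsupp x hx; omega)
    have h2 := KeyAux.masterM μ μ₀ b θ N dd (2*n) Dn Pn F2 cg 1 hμ0 hμ hbsymm hbnn hN
      hDn hPn hDn0 hPn0 hF zero_le_one hc1g hc2g g hgsum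
    have h3 : nsS μ F2 (lapS μ b θ N g) ≤ (2*(Dn*Pn)*μ₀⁻¹*w2)^2 * U2 := by
      rw [h1]
      refine h2.trans ?_
      have hwt : (∑' x, μ x * ‖g x‖^2) = wnormSq μ g := rfl
      rw [hwt]
      calc 4 * μ₀⁻¹^2 * (1 * Dn * Pn)^2 * wnormSq μ g
          ≤ 4 * μ₀⁻¹^2 * (1 * Dn * Pn)^2 * (w2^2 * U2) := by
            refine mul_le_mul_of_nonneg_left hwn (by positivity)
        _ = (2*(Dn*Pn)*μ₀⁻¹*w2)^2 * U2 := by ring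
    exact KeyAux.sqrt_bound hU0 (by positivity) h3
  -- coefficient identities
  have hτcoef1 : 2*(Dn*Pn)*μ₀⁻¹*(1/(n:ℝ)) = 2*β := by rw [hβdef]; ring
  have hτcoef2 : 2*(Dn*Pn)*μ₀⁻¹*(β/(n:ℝ)) = 2*β^2 := by rw [hβdef]; ring
  have hτcoef3 : 2*(Dn*Pn)*μ₀⁻¹*(2*β/(n:ℝ)) = 4*β^2 := by rw [hβdef]; ring
  have hUU : Real.sqrt U2 * Real.sqrt U2 = U2 := Real.mul_self_sqrt hU0
  -- weighted-norm bounds for the small functions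
  have hgd_wn : wnormSq μ gd ≤ (1/(n:ℝ))^2 * U2 := by
    refine wn_ptwise gd (1/(n:ℝ)) (by positivity) fun x => ?_
    simp only [hgddef]
    rw [norm_mul, Complex.norm_real, Real.norm_eq_abs]
    exact mul_le_mul_of_nonneg_right (hχψ x) (norm_nonneg _)
  have huΓ_wn : wnormSq μ uΓ ≤ (β/(n:ℝ))^2 * U2 := by
    refine wn_ptwise uΓ (β/(n:ℝ)) (by positivity) fun x => ?_
    simp only [huΓdef]
    rw [norm_mul, mul_comm (β/(n:ℝ)) _]
    exact mul_le_mul_of_nonneg_left (hΓbd x) (norm_nonneg _)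
  -- sqrt bounds for laplacians of small functions
  have huΓsupp : ∀ x, uΓ x ≠ 0 → dd x + 1 ≤ 2*n := by
    intro x hx
    refine hΓsupp x fun h => hx ?_
    simp only [huΓdef, h]
    simp
  have hLgd : Real.sqrt (nsS μ F2 (lapS μ b θ N gd)) ≤ 2*τ := by
    have h := lapb gd (1/(n:ℝ)) (by positivity) hgdsupp hgd_wn
    rw [hτcoef1] at h
    refine h.trans (le_of_eq ?_)
    rw [hτdef]
    ring
  have hLuΓ : Real.sqrt (nsS μ F2 (lapS μ b θ N uΓ)) ≤ 2*β^2*Real.sqrt U2 := by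
    have h := lapb uΓ (β/(n:ℝ)) (by positivity) huΓsupp huΓ_wn
    rw [hτcoef2] at h
    exact h
  have hLEu : Real.sqrt (nsS μ F2 (lapS μ b θ N Eu)) ≤ 4*β^2*Real.sqrt U2 := by
    have h := lapb Eu (2*β/(n:ℝ)) (by positivity) hEsupp hEu_wn
    rw [hτcoef3] at h
    exact h
  -- Green-based error bounds
  have hbnd_uΓ : ‖ipS μ F2 Lu uΓ‖ ≤ 2*τ^2 := by
    rw [hLudef, hgreen u uΓ (fun x hx => by have := huΓsupp x hx; omega)]
    refine (hCS u (lapS μ b θ N uΓ)).trans ?_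
    calc Real.sqrt (nsS μ F2 u) * Real.sqrt (nsS μ F2 (lapS μ b θ N uΓ))
        ≤ Real.sqrt U2 * (2*β^2*Real.sqrt U2) := by
          refine mul_le_mul hsqrtu hLuΓ (Real.sqrt_nonneg _) (Real.sqrt_nonneg _)
      _ = 2*τ^2 := by rw [hτsq]; linear_combination (2*β^2) * hUU
  have hbnd_Eu : ‖ipS μ F2 Lu Eu‖ ≤ 4*τ^2 := by
    rw [hLudef, hgreen u Eu (fun x hx => by have := hEsupp x hx; omega)]
    refine (hCS u (lapS μ b θ N Eu)).trans ?_
    calc Real.sqrt (nsS μ F2 u) * Real.sqrt (nsS μ F2 (lapS μ b θ N Eu))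
        ≤ Real.sqrt U2 * (4*β^2*Real.sqrt U2) := by
          refine mul_le_mul hsqrtu hLEu (Real.sqrt_nonneg _) (Real.sqrt_nonneg _)
      _ = 4*τ^2 := by rw [hτsq]; linear_combination (4*β^2) * hUU
  -- bounds for inner products against ψ·Lu
  have hudψ_sqrt : Real.sqrt (nsS μ F2 udψ) ≤ τ := by
    have h1 : nsS μ F2 udψ ≤ β^2 * U2 := by
      have h2 := KeyAux.nsS_ptwise_le μ F2 hμnn u udψ β hβnn (fun x _ => by
        simp only [hudψdef]
        rw [norm_mul, mul_comm β _]
        exact mul_le_mul_of_nonneg_left (hdψbd x) (norm_nonneg _))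
      refine h2.trans ?_
      exact mul_le_mul_of_nonneg_left hnsu (sq_nonneg β)
    have := KeyAux.sqrt_bound hU0 hβnn h1
    refine this.trans (le_of_eq ?_)
    rw [hτdef]
  have hbnd_udψ : ‖ipS μ F2 ψLu udψ‖ ≤ Real.sqrt A * τ := by
    refine (hCS ψLu udψ).trans ?_
    exact mul_le_mul_of_nonneg_left hudψ_sqrt (Real.sqrt_nonneg _)
  have hbnd_Pψu : ‖ipS μ F2 ψLu Pψu‖ ≤ Real.sqrt A * (2*τ) := by
    refine (hCS ψLu Pψu).trans ?_
    exact mul_le_mul_of_nonneg_left hPψu_sqrt (Real.sqrt_nonneg _)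
  -- the eigen-equation step
  set g2 : V → ℂ := fun x => ((ψ x^2 : ℝ) : ℂ) * u x with hg2def
  have hg2supp : ∀ x, g2 x ≠ 0 → dd x ≤ 2*n := by
    intro x hx
    have hψx : ψ x ≠ 0 := by
      intro h
      refine hx ?_
      simp only [hg2def, h]
      norm_num
    have := hψsupp x hψx
    omega
  have hLL : ∀ x, lapS μ b θ N Lu x = (lam:ℂ)*Complex.I*u x - (W x:ℂ)*u x := by
    intro x
    have h0 : Lu = magLap μ b θ u := by
      rw [hLudef]
      exact funext fun z => (lap_eq_mag u z).symm
    calc lapS μ b θ N Lu x = magLap μ b θ Lu x := (lap_eq_mag Lu x).symm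
      _ = magLap μ b θ (magLap μ b θ u) x := by rw [h0]
      _ = (lam:ℂ)*Complex.I*u x - (W x:ℂ)*u x := by linear_combination heq x
  set Qψ : ℝ := ∑ x ∈ F2, μ x * q (dd x) * ψ x^2 * ‖u x‖^2 with hQψdef
  have hQψ0 : 0 ≤ Qψ := by
    rw [hQψdef]
    refine Finset.sum_nonneg fun x _ => ?_
    have hq0 : 0 ≤ q (dd x) := le_of_lt (hqpos _ (Nat.cast_nonneg _))
    have := hμnn x
    positivity
  have hmain_re : (ipS μ F2 (lapS μ b θ N Lu) g2).re ≤ Qψ := by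
    rw [ipS, Complex.re_sum, hQψdef]
    refine Finset.sum_le_sum fun x _ => ?_
    rw [hLL x]
    simp only [hg2def]
    rw [map_mul, Complex.conj_ofReal]
    rw [show (μ x:ℂ) * ((lam:ℂ)*Complex.I*u x - (W x:ℂ)*u x)
        * (((ψ x^2:ℝ):ℂ) * (starRingEnd ℂ) (u x))
        = ((μ x * ψ x^2 : ℝ):ℂ) * (((lam:ℂ)*Complex.I - (W x:ℂ))
            * (u x * (starRingEnd ℂ) (u x))) from by push_cast; ring]
    rw [Complex.mul_conj]
    rw [Complex.re_ofReal_mul]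
    have hre2 : (((lam:ℂ)*Complex.I - (W x:ℂ)) * ((Complex.normSq (u x) : ℝ):ℂ)).re
        = -(W x) * Complex.normSq (u x) := by
      simp [Complex.mul_re, Complex.sub_re, Complex.sub_im, Complex.mul_im,
        Complex.I_re, Complex.I_im, Complex.ofReal_re, Complex.ofReal_im]
    rw [hre2]
    have hnsq : Complex.normSq (u x) = ‖u x‖^2 := by
      rw [Complex.normSq_eq_norm_sq]
    rw [hnsq]
    have hq1 : -(W x) ≤ q (dd x) := by
      have := hW x
      linarith
    have hps : (0:ℝ) ≤ μ x * ψ x^2 := mul_nonneg (hμnn x) (sq_nonneg _)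
    have hkey := mul_le_mul_of_nonneg_left
      (mul_le_mul_of_nonneg_right hq1 (sq_nonneg ‖u x‖)) hps
    linarith only [hkey]
  have hgreen2 : ipS μ F2 (lapS μ b θ N Lu) g2 = ipS μ F2 Lu (lapS μ b θ N g2) := by
    rw [hLudef]
    exact hgreen (lapS μ b θ N u) g2 hg2supp
  -- decomposition of lap g2
  have hdecg2 : ∀ x ∈ F2, lapS μ b θ N g2 x
      = ((1:ℝ):ℂ) * (((ψ x^2:ℝ):ℂ) * Lu x) + ((1:ℝ):ℂ) * (u x * dcS μ b N csq x)
        + ((-1:ℝ):ℂ) * (pcS μ b θ N csq u x) := by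
    intro x _
    have h : lapS μ b θ N g2 x = ((ψ x^2:ℝ):ℂ) * Lu x + u x * dcS μ b N csq x
        - pcS μ b θ N csq u x := KeyAux.lap_decomp μ b θ N (fun z => ψ z^2) u x
    rw [h]
    push_cast
    ring
  have hsplitm := KeyAux.ipS_split3R μ F2 Lu (lapS μ b θ N g2)
      (fun x => ((ψ x^2:ℝ):ℂ) * Lu x) (fun x => u x * dcS μ b N csq x)
      (pcS μ b θ N csq u) 1 1 (-1) hdecg2
  have hAre : (ipS μ F2 Lu (fun x => ((ψ x^2:ℝ):ℂ) * Lu x)).re = A :=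
    KeyAux.re_ip_sq μ F2 ψ hψ0 Lu
  -- second piece
  have hdc2 : ∀ x ∈ F2, u x * dcS μ b N csq x
      = ((2:ℝ):ℂ) * ((ψ x:ℂ) * udψ x) + ((-1:ℝ):ℂ) * uΓ x + ((0:ℝ):ℂ) * 0 := by
    intro x _
    have h : dcS μ b N csq x = 2 * (ψ x:ℂ) * dψ x - Γf x := KeyAux.dc_split μ b N ψ x
    rw [h]
    simp only [hudψdef, huΓdef]
    push_cast
    ring
  have hsplit2 := KeyAux.ipS_split3R μ F2 Lu (fun x => u x * dcS μ b N csq x)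
      (fun x => (ψ x:ℂ) * udψ x) uΓ (fun _ => 0) 2 (-1) 0 hdc2
  have hzero : ipS μ F2 Lu (fun _ => (0:ℂ)) = 0 := by
    simp [KeyAux.ipS]
  have hmove2 : ipS μ F2 Lu (fun x => (ψ x:ℂ) * udψ x) = ipS μ F2 ψLu udψ :=
    KeyAux.ipS_real_move μ F2 ψ Lu udψ
  have hip2bound : ‖ipS μ F2 Lu (fun x => u x * dcS μ b N csq x)‖
      ≤ 2*(Real.sqrt A * τ) + 2*τ^2 := by
    rw [hsplit2, hzero, mul_zero, add_zero]
    refine (norm_add_le _ _).trans ?_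
    have h1 : ‖((2:ℝ):ℂ) * ipS μ F2 Lu (fun x => (ψ x:ℂ) * udψ x)‖
        ≤ 2*(Real.sqrt A * τ) := by
      rw [norm_mul, hmove2, Complex.norm_real, Real.norm_eq_abs]
      rw [show |(2:ℝ)| = 2 by norm_num]
      exact mul_le_mul_of_nonneg_left hbnd_udψ (by norm_num)
    have h2 : ‖((-1:ℝ):ℂ) * ipS μ F2 Lu uΓ‖ ≤ 2*τ^2 := by
      rw [norm_mul, Complex.norm_real, Real.norm_eq_abs]
      rw [show |(-1:ℝ)| = 1 by norm_num, one_mul]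
      exact hbnd_uΓ
    linarith only [h1, h2]
  -- third piece
  have hdc3 : ∀ x ∈ F2, pcS μ b θ N csq u x
      = ((2:ℝ):ℂ) * ((ψ x:ℂ) * Pψu x) + ((-1:ℝ):ℂ) * Eu x + ((0:ℝ):ℂ) * 0 := by
    intro x _
    have h : pcS μ b θ N csq u x = 2 * (ψ x:ℂ) * Pψu x - Eu x :=
      KeyAux.pc_split μ b θ N ψ u x
    rw [h]
    push_cast
    ring
  have hsplit3 := KeyAux.ipS_split3R μ F2 Lu (pcS μ b θ N csq u)
      (fun x => (ψ x:ℂ) * Pψu x) Eu (fun _ => 0) 2 (-1) 0 hdc3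
  have hmove3 : ipS μ F2 Lu (fun x => (ψ x:ℂ) * Pψu x) = ipS μ F2 ψLu Pψu :=
    KeyAux.ipS_real_move μ F2 ψ Lu Pψu
  have hip3bound : ‖ipS μ F2 Lu (pcS μ b θ N csq u)‖
      ≤ 2*(Real.sqrt A * (2*τ)) + 4*τ^2 := by
    rw [hsplit3, hzero, mul_zero, add_zero]
    refine (norm_add_le _ _).trans ?_
    have h1 : ‖((2:ℝ):ℂ) * ipS μ F2 Lu (fun x => (ψ x:ℂ) * Pψu x)‖
        ≤ 2*(Real.sqrt A * (2*τ)) := by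
      rw [norm_mul, hmove3, Complex.norm_real, Real.norm_eq_abs]
      rw [show |(2:ℝ)| = 2 by norm_num]
      exact mul_le_mul_of_nonneg_left hbnd_Pψu (by norm_num)
    have h2 : ‖((-1:ℝ):ℂ) * ipS μ F2 Lu Eu‖ ≤ 4*τ^2 := by
      rw [norm_mul, Complex.norm_real, Real.norm_eq_abs]
      rw [show |(-1:ℝ)| = 1 by norm_num, one_mul]
      exact hbnd_Eu
    linarith only [h1, h2]
  -- A inequality
  have hAineq : A ≤ Qψ + 6*τ*Real.sqrt A + 6*τ^2 := by
    have h1 : (ipS μ F2 Lu (lapS μ b θ N g2)).re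
        = A + (ipS μ F2 Lu (fun x => u x * dcS μ b N csq x)).re
          - (ipS μ F2 Lu (pcS μ b θ N csq u)).re := by
      rw [hsplitm]
      simp only [Complex.add_re, Complex.re_ofReal_mul]
      rw [hAre]
      ring
    have h2 : (ipS μ F2 Lu (lapS μ b θ N g2)).re ≤ Qψ := by
      rw [← hgreen2]
      exact hmain_re
    have h3 := (abs_le.mp ((hre _).trans hip2bound)).1
    have h4 := (abs_le.mp ((hre _).trans hip3bound)).2
    have h5 := (abs_le.mp ((hre _).trans hip2bound)).2
    have h6 := (abs_le.mp ((hre _).trans hip3bound)).1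
    linarith only [h1, h2, h3, h4, h5, h6]
  -- S' inequality
  have hS'split : ∀ x ∈ F2, lapS μ b θ N ψu x
      = ((1:ℝ):ℂ)*ψLu x + ((1:ℝ):ℂ)*udψ x + ((-1:ℝ):ℂ)*Pψu x := by
    intro x _
    have h : lapS μ b θ N ψu x = (ψ x:ℂ)*Lu x + u x*dψ x - Pψu x :=
      KeyAux.lap_decomp μ b θ N ψ u x
    rw [h]
    simp only [hψLudef, hudψdef]
    push_cast
    ring
  have hS're : S' = (ipS μ F2 (lapS μ b θ N ψu) (lapS μ b θ N ψu)).re :=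
    (KeyAux.ipS_self_re μ F2 _).symm
  have hS'ineq : S' ≤ (Real.sqrt A + 3*τ) * Real.sqrt S' := by
    have hsp := KeyAux.ipS_split3L μ F2 (lapS μ b θ N ψu) ψLu udψ Pψu
      (lapS μ b θ N ψu) 1 1 (-1) hS'split
    have hb1 : ‖ipS μ F2 ψLu (lapS μ b θ N ψu)‖ ≤ Real.sqrt A * Real.sqrt S' :=
      hCS _ _
    have hb2 : ‖ipS μ F2 udψ (lapS μ b θ N ψu)‖ ≤ τ * Real.sqrt S' := by
      refine (hCS _ _).trans ?_
      exact mul_le_mul_of_nonneg_right hudψ_sqrt (Real.sqrt_nonneg _)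
    have hb3 : ‖ipS μ F2 Pψu (lapS μ b θ N ψu)‖ ≤ 2*τ * Real.sqrt S' := by
      refine (hCS _ _).trans ?_
      exact mul_le_mul_of_nonneg_right hPψu_sqrt (Real.sqrt_nonneg _)
    have h1 : S' = (ipS μ F2 ψLu (lapS μ b θ N ψu)).re
        + (ipS μ F2 udψ (lapS μ b θ N ψu)).re
        - (ipS μ F2 Pψu (lapS μ b θ N ψu)).re := by
      rw [hS're, hsp]
      simp only [Complex.add_re, Complex.re_ofReal_mul]
      ring
    have h2 := (abs_le.mp ((hre _).trans hb1)).2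
    have h3 := (abs_le.mp ((hre _).trans hb2)).2
    have h4 := (abs_le.mp ((hre _).trans hb3)).1
    linarith only [h1, h2, h3, h4]
  have hS'sq : S' ≤ (Real.sqrt A + 3*τ)^2 :=
    KeyAux.le_sq_of_le_mul_sqrt hS'0 (by positivity) hS'ineq
  -- S inequality
  have hSmag : wnormSq μ (magLap μ b θ χu) = nsS μ F2 (lapS μ b θ N χu) := by
    have h1 : ∀ x, μ x * ‖magLap μ b θ χu x‖^2 = μ x * ‖lapS μ b θ N χu x‖^2 :=
      fun x => by rw [lap_eq_mag]
    rw [show wnormSq μ (magLap μ b θ χu) = ∑' x, μ x * ‖lapS μ b θ N χu x‖^2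
      from tsum_congr h1]
    exact tsum_eq_sum fun x hx => by rw [hlap_supp χu hχusupp x hx]; simp
  set Sv : ℝ := nsS μ F2 (lapS μ b θ N χu) with hSvdef
  have hSv0 : 0 ≤ Sv := KeyAux.nsS_nonneg μ hμnn F2 _
  have hχusplit : ∀ x ∈ F2, lapS μ b θ N χu x
      = ((1:ℝ):ℂ)*lapS μ b θ N ψu x + ((1:ℝ):ℂ)*lapS μ b θ N gd x + ((0:ℝ):ℂ)*0 := by
    intro x _
    have hfun : χu = fun z => ψu z + gd z := by
      refine funext fun z => ?_
      simp only [hχudef, hψudef, hgddef]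
      push_cast
      ring
    rw [hfun, KeyAux.lap_add μ b θ N ψu gd x]
    push_cast
    ring
  have hSre : Sv = (ipS μ F2 (lapS μ b θ N χu) (lapS μ b θ N χu)).re :=
    (KeyAux.ipS_self_re μ F2 _).symm
  have hSineq : Sv ≤ (Real.sqrt S' + 2*τ) * Real.sqrt Sv := by
    have hsp := KeyAux.ipS_split3L μ F2 (lapS μ b θ N χu) (lapS μ b θ N ψu)
      (lapS μ b θ N gd) (fun _ => 0) (lapS μ b θ N χu) 1 1 0 (fun x hx => by
        rw [hχusplit x hx])
    have hb1 : ‖ipS μ F2 (lapS μ b θ N ψu) (lapS μ b θ N χu)‖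
        ≤ Real.sqrt S' * Real.sqrt Sv := hCS _ _
    have hb2 : ‖ipS μ F2 (lapS μ b θ N gd) (lapS μ b θ N χu)‖
        ≤ 2*τ * Real.sqrt Sv := by
      refine (hCS _ _).trans ?_
      exact mul_le_mul_of_nonneg_right hLgd (Real.sqrt_nonneg _)
    have h1 : Sv = (ipS μ F2 (lapS μ b θ N ψu) (lapS μ b θ N χu)).re
        + (ipS μ F2 (lapS μ b θ N gd) (lapS μ b θ N χu)).re
        + 0 := by
      rw [hSre, hsp]
      simp only [Complex.add_re, Complex.re_ofReal_mul]
      have hz : ipS μ F2 (fun _ => (0:ℂ)) (lapS μ b θ N χu) = 0 := by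
        simp [KeyAux.ipS]
      rw [hz]
      simp
    have h2 := (abs_le.mp ((hre _).trans hb1)).2
    have h3 := (abs_le.mp ((hre _).trans hb2)).2
    linarith only [h1, h2, h3]
  have hSsq : Sv ≤ (Real.sqrt S' + 2*τ)^2 :=
    KeyAux.le_sq_of_le_mul_sqrt hSv0 (by positivity) hSineq
  -- Q comparison
  have hQt_eq : (∑' x, μ x * q (dd x) * χ x^2 * ‖u x‖^2)
      = ∑ x ∈ F2, μ x * q (dd x) * χ x^2 * ‖u x‖^2 := by
    refine tsum_eq_sum fun x hx => ?_
    have h0 : χ x = 0 := by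
      refine hχzero x ?_
      by_contra h
      exact hx (hF x (by omega))
    rw [h0]
    ring
  have hQt0 : 0 ≤ ∑' x, μ x * q (dd x) * χ x^2 * ‖u x‖^2 := by
    refine tsum_nonneg fun x => ?_
    have hq0 : 0 ≤ q (dd x) := le_of_lt (hqpos _ (Nat.cast_nonneg _))
    have := hμnn x
    positivity
  have hQψQt : Qψ ≤ ∑' x, μ x * q (dd x) * χ x^2 * ‖u x‖^2 := by
    rw [hQt_eq, hQψdef]
    refine Finset.sum_le_sum fun x _ => ?_
    have hq0 : 0 ≤ q (dd x) := le_of_lt (hqpos _ (Nat.cast_nonneg _))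
    have hψχ2 : ψ x^2 ≤ χ x^2 := pow_le_pow_left₀ (hψ0 x) (hψleχ x) 2
    have h1 : 0 ≤ μ x * q (dd x) := mul_nonneg (hμnn x) hq0
    have hkey := mul_le_mul_of_nonneg_right
      (mul_le_mul_of_nonneg_left hψχ2 h1) (sq_nonneg ‖u x‖)
    linarith only [hkey]
  -- final arithmetic
  have hsqA := Real.sq_sqrt hA0
  have hsqS' := Real.sq_sqrt hS'0
  have hA2 : A ≤ 2*Qψ + 48*τ^2 := by
    linarith only [hAineq, sq_nonneg (Real.sqrt A - 6*τ), hsqA]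
  have hS'2 : S' ≤ 3*Qψ + 99*τ^2 := by
    linarith only [hS'sq, hsqA, sq_nonneg (Real.sqrt A - 6*τ), hA2]
  have hS2 : Sv ≤ 2*S' + 8*τ^2 := by
    linarith only [hSsq, hsqS', sq_nonneg (Real.sqrt S' - 2*τ)]
  have hτβ : τ^2 ≤ β*U2 := by
    linarith only [hτsq, mul_nonneg (mul_nonneg hβnn (sub_nonneg.mpr hβ1)) hU0]
  have hβU0 : 0 ≤ β*U2 := mul_nonneg hβnn hU0
  have hfinal : Sv ≤ 236 * (β * U2 + ∑' x, μ x * q (dd x) * χ x^2 * ‖u x‖^2) := by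
    linarith only [hS2, hS'2, hτβ, hQψQt, hQt0, hβU0, hQψ0]
  calc wnormSq μ (magLap μ b θ χu) = Sv := by rw [hSmag]
    _ ≤ 236 * (β * U2 + ∑' x, μ x * q (dd x) * χ x^2 * ‖u x‖^2) := hfinal
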